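/- arXiv:1501.06736 — 7 statements merged into one kernel-verified Lean document; each statement's English description precedes it below -/
import Mathlib

section
/- Let d_l > 2 be an integer and set d_r = d_g = 2. For every x₁ ∈ (0,1) such that x₂[x₁] ∈ [0,1] and φ[x₁] ∈ [0,1], the BEC potential function of the (d_l,2,2) MN code at the nontrivial fixed point is strictly positive: U_BEC(x₁, x₂[x₁]; φ[x₁]) > 0. -/
/-- The BEC potential function `U_BEC(x₁,x₂;ε)` of the `(d_l,d_r,d_g)` MN code. -/
noncomputable def UBEC (dl dr dg : ℕ) (x₁ x₂ ε : ℝ) : ℝ :=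
  1 - ε * (1 - (1-x₁)^dr * (1-x₂)^(dg-1))^dg
    - ((dr : ℝ)/(dl : ℝ)) * (1 - (1-x₁)^(dr-1) * (1-x₂)^dg)^dl
    - (1-x₁)^dr * (1-x₂)^dg
    - (dr : ℝ) * x₁ * (1-x₁)^(dr-1) * (1-x₂)^dg
    - (dg : ℝ) * x₂ * (1-x₁)^dr * (1-x₂)^(dg-1)

/-- The nontrivial fixed-point parametrization `x₂[x₁]`. -/
noncomputable def x2FP (dl dr dg : ℕ) (x₁ : ℝ) : ℝ :=
  1 - ((1 - x₁ ^ ((1:ℝ)/((dl:ℝ) - 1))) / (1-x₁)^(dr-1)) ^ ((1:ℝ)/(dg:ℝ))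

/-- The channel value `φ[x₁]` at the nontrivial fixed point. -/
noncomputable def phiFP (dl dr dg : ℕ) (x₁ : ℝ) : ℝ :=
  x2FP dl dr dg x₁ / (1 - (1-x₁)^dr * (1 - x2FP dl dr dg x₁)^(dg-1))^(dg-1)

set_option maxHeartbeats 1000000 in
/-- For `(d_l,2,2)` MN codes with `d_l > 2`, the BEC potential at every
nontrivial fixed point is strictly positive. -/
theorem stmt3 (dl : ℕ) (hl : 2 < dl) :
    ∀ x₁ ∈ Set.Ioo (0:ℝ) 1,
      x2FP dl 2 2 x₁ ∈ Set.Icc (0:ℝ) 1 →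
      phiFP dl 2 2 x₁ ∈ Set.Icc (0:ℝ) 1 →
      0 < UBEC dl 2 2 x₁ (x2FP dl 2 2 x₁) (phiFP dl 2 2 x₁) := by
  intro x hx _ _
  obtain ⟨hx0, hx1⟩ := hx
  set m := dl - 1 with hm
  have hdl : dl = m + 1 := by omega
  have hm2 : 2 ≤ m := by omega
  have hdlR : ((dl:ℝ)) = (m:ℝ) + 1 := by rw [hdl]; push_cast; ring
  have hmR : (1:ℝ) ≤ (m:ℝ) := by exact_mod_cast Nat.one_le_of_lt hm2
  -- t
  set t : ℝ := x ^ ((1:ℝ)/((dl:ℝ)-1)) with htdef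
  have hePos : 0 < (1:ℝ)/((dl:ℝ)-1) := by
    apply div_pos one_pos; rw [hdlR]; linarith
  have ht0 : 0 < t := Real.rpow_pos_of_pos hx0 _
  have ht1 : t < 1 := Real.rpow_lt_one hx0.le hx1 hePos
  have htm : t ^ m = x := by
    rw [htdef, ← Real.rpow_natCast (x ^ ((1:ℝ)/((dl:ℝ)-1))) m, ← Real.rpow_mul hx0.le]
    rw [show (1:ℝ)/((dl:ℝ)-1) * (m:ℝ) = 1 by
      rw [hdlR]; field_simp; rw [add_sub_cancel_right]; exact div_self (ne_of_gt (by linarith))]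
    exact Real.rpow_one x
  -- s
  set s : ℝ := Real.sqrt ((1-t)/(1-x)) with hsdef
  have hbase : 0 < (1-t)/(1-x) := div_pos (by linarith) (by linarith)
  have hs2 : s^2 = (1-t)/(1-x) := Real.sq_sqrt hbase.le
  have hs0 : 0 < s := Real.sqrt_pos.mpr hbase
  have e1 : (1-x)*s^2 = 1-t := by
    rw [hs2, mul_comm]
    exact div_mul_cancel₀ _ (by linarith : (1:ℝ)-x ≠ 0)
  -- x2FP = 1 - s
  have hx2eq : x2FP dl 2 2 x = 1 - s := by
    unfold x2FP
    rw [show ((2:ℕ):ℝ) = 2 by norm_num, show ((2:ℕ)-1) = 1 from rfl, pow_one,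
      ← htdef, hsdef, Real.sqrt_eq_rpow]
  -- phiFP
  have hphieq : phiFP dl 2 2 x = (1-s)/(1 - (1-x)^2*s) := by
    unfold phiFP
    rw [hx2eq, show ((2:ℕ)-1) = 1 from rfl, pow_one, pow_one,
      show (1:ℝ) - (1-s) = s by ring]
  -- geometric sum
  set σ : ℝ := ∑ i ∈ Finset.range m, t^i with hσdef
  have hgeom : (1-t) * σ = 1 - t^m := by
    have := geom_sum_mul t m
    rw [hσdef]; linarith [this]
  have hσ1 : 1 + t ≤ σ := by
    have hsub : Finset.range 2 ⊆ Finset.range m := Finset.range_subset_range.mpr hm2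
    have := Finset.sum_le_sum_of_subset_of_nonneg hsub
      (fun i _ _ => pow_nonneg ht0.le i)
    calc 1 + t = ∑ i ∈ Finset.range 2, t^i := by
          simp [Finset.sum_range_succ]
      _ ≤ σ := this
  have hσm : σ < (m:ℝ) := by
    have h2 : σ < ∑ _i ∈ Finset.range m, (1:ℝ) := by
      apply Finset.sum_lt_sum (fun i _ => pow_le_one₀ ht0.le ht1.le)
      exact ⟨1, Finset.mem_range.mpr (by omega), by simpa using ht1⟩
    simpa using h2
  have hσgt : 1 < σ := by linarith
  have hσpos : (0:ℝ) < 1 + σ := by linarith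
  have hs2σ : s^2 * σ = 1 := by
    have h1x : (1-x) = (1-t)*σ := by rw [← htm]; linarith
    rw [hs2, h1x]
    have h1 : (1:ℝ)-t ≠ 0 := by linarith
    have h2 : σ ≠ 0 := by linarith
    field_simp
  clear_value t s σ
  have hs1 : s ≤ 1 := by nlinarith
  -- key: s*(1+σ) > 2
  have hP2 : (s*(1+σ))^2 = s^2 + 2 + σ := by linear_combination (2+σ) * hs2σ
  have hss : 0 < s^2 + σ - 2 := by
    nlinarith [hs2σ, mul_pos (sub_pos.mpr hσgt) (sub_pos.mpr hσgt)]
  have hP4 : 4 < (s*(1+σ))^2 := by rw [hP2]; linarith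
  have hP : 2 < s*(1+σ) := by
    apply lt_of_pow_lt_pow_left₀ 2 (le_of_lt (mul_pos hs0 hσpos))
    calc (2:ℝ)^2 = 4 := by norm_num
      _ < _ := hP4
  have hD : 0 < 1 - (1-x)^2*s := by nlinarith [sq_nonneg (1-x)]
  -- UBEC = x * F
  have hεD : ((1-s)/(1 - (1-x)^2*s)) * (1 - (1-x)^2*s)^2 = (1-s)*(1-(1-x)^2*s) := by
    field_simp
  have hteq : 1 - (1-x)*s^2 = t := by linarith
  have hUeq : UBEC dl 2 2 x (1-s) ((1-s)/(1-(1-x)^2*s))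
      = x * (s*(2-x) - 2*(1-x)*s^2 - (2/(dl:ℝ))*t) := by
    unfold UBEC
    simp only [show ((2:ℕ)-1) = 1 from rfl, pow_one]
    rw [show (1:ℝ) - (1-s) = s by ring]
    rw [hteq, hdl, pow_succ t m, htm]
    rw [hεD]
    push_cast
    ring
  rw [hx2eq, hphieq, hUeq]
  apply mul_pos hx0
  -- final inequality
  rw [hdlR]
  have hB : 2*(2-x)*((m:ℝ)+1) - (2*((m:ℝ)+1) - 2*t*(m:ℝ))*(1+σ) = 2*t*((m:ℝ)-σ) := by
    rw [← htm]; linear_combination (-2*((m:ℝ)+1)) * hgeom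
  have h2x : 0 < 2 - x := by linarith
  have step1 : 2*(2-x) < s*(2-x)*(1+σ) := by
    have h := mul_pos (by linarith : (0:ℝ) < s*(1+σ) - 2) h2x
    nlinarith [h]
  have step2 : (2*((m:ℝ)+1) - 2*t*(m:ℝ))*(1+σ) < 2*(2-x)*((m:ℝ)+1) := by
    have h := mul_pos ht0 (by linarith : (0:ℝ) < (m:ℝ) - σ)
    nlinarith [h, hB]
  have hc : (2/((m:ℝ)+1)) * ((m:ℝ)+1) = 2 := by
    field_simp
  have e2 : (s*(2-x) - 2*(1-x)*s^2 - (2/((m:ℝ)+1))*t) * ((1+σ)*((m:ℝ)+1))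
      = s*(2-x)*(1+σ)*((m:ℝ)+1) - (2*((m:ℝ)+1) - 2*t*(m:ℝ))*(1+σ) := by
    linear_combination (-2*(1+σ)*((m:ℝ)+1)) * e1 + (-t*(1+σ)) * hc
  have hmpos : (0:ℝ) < (m:ℝ)+1 := by linarith
  have step1' : 2*(2-x)*((m:ℝ)+1) < s*(2-x)*(1+σ)*((m:ℝ)+1) := by
    have h := mul_lt_mul_of_pos_right step1 hmpos
    nlinarith [h]
  have hFC : 0 < (s*(2-x) - 2*(1-x)*s^2 - (2/((m:ℝ)+1))*t) * ((1+σ)*((m:ℝ)+1)) := by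
    rw [e2]
    linarith [step1', step2]
  by_contra hcon
  push_neg at hcon
  have hle := mul_le_mul_of_nonneg_right hcon (le_of_lt (mul_pos hσpos hmpos))
  rw [zero_mul] at hle
  linarith
end

section
/- Let d_l > 3 be an integer and set d_r = d_g = 3. For every x₁ ∈ (0,1) such that x₂[x₁] ∈ [0,1] and φ[x₁] ∈ [0,1], the BEC potential function of the (d_l,3,3) MN code at the nontrivial fixed point is strictly positive: U_BEC(x₁, x₂[x₁]; φ[x₁]) > 0. -/
/-- Auxiliary: positivity of a two-variable polynomial on the unit box. -/
lemma aux_T_nonneg (u v : ℝ) (hu0 : 0 < u) (hu1 : u < 1) (hv0 : 0 < v) (hv1 : v ≤ 1) :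
    0 ≤ 2 + 2*v - v^2 - 2*u^2 - 4*u^2*v + u^3 + u^3*v + u^3*v^2 + u^3*v^3 - u^3*v^4 := by
  nlinarith [mul_nonneg (sub_nonneg.2 hv1) (sub_nonneg.2 hu1.le), sq_nonneg (1-u), sq_nonneg (1-v),
    mul_pos hu0 hv0, mul_nonneg (mul_nonneg hu0.le hu0.le) (sub_nonneg.2 hv1),
    mul_nonneg (mul_nonneg hu0.le hv0.le) (sub_nonneg.2 hv1),
    mul_nonneg (mul_nonneg (mul_nonneg hu0.le hu0.le) hu0.le) (mul_nonneg hv0.le (sub_nonneg.2 hv1)),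
    sq_nonneg (u - v), sq_nonneg (u*v - 1), sq_nonneg (u + v - 2)]

/-- Auxiliary: the main polynomial inequality after clearing denominators. -/
lemma aux_poly (u v : ℝ) (hu0 : 0 < u) (hu1 : u < 1) (hv0 : 0 < v) (hv1 : v ≤ 1) :
    3*(u^2*v^3)*(1 - u^2*v^3)*(1-u)
      < (v - 2*u^3*v^2 + 4*u^3*v^3 - 3*u^2*v^3) * (u + u^2*v^3) := by
  have hT := aux_T_nonneg u v hu0 hu1 hv0 hv1
  have hkey : (v - 2*u^3*v^2 + 4*u^3*v^3 - 3*u^2*v^3) * (u + u^2*v^3)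
      - 3*(u^2*v^3)*(1 - u^2*v^3)*(1-u)
      = u*v*((1-u)^3*(1+u))
        + (u*v*(1-v)*u) * (2 + 2*v - v^2 - 2*u^2 - 4*u^2*v + u^3 + u^3*v + u^3*v^2 + u^3*v^3 - u^3*v^4) := by
    ring
  have h1u : (0:ℝ) < 1 - u := by linarith
  have h1 : 0 < u*v*((1-u)^3*(1+u)) := by
    apply mul_pos (mul_pos hu0 hv0)
    apply mul_pos (pow_pos h1u 3)
    linarith
  have h2 : 0 ≤ (u*v*(1-v)*u) *
      (2 + 2*v - v^2 - 2*u^2 - 4*u^2*v + u^3 + u^3*v + u^3*v^2 + u^3*v^3 - u^3*v^4) := by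
    apply mul_nonneg _ hT
    apply mul_nonneg (mul_nonneg (mul_nonneg hu0.le hv0.le) (by linarith)) hu0.le
  linarith [hkey.ge, hkey.le, h1, h2]

/-- Auxiliary: the analytic core of the theorem, in plain variables. -/
lemma aux_main (dl : ℕ) (u v t : ℝ) (hdl4 : (4:ℝ) ≤ (dl:ℝ))
    (hu0 : 0 < u) (hu1 : u < 1) (hv0 : 0 < v) (hv1 : v ≤ 1) (ht0 : 0 < t)
    (hs : u^2 * v^3 = 1 - t) (hber : u ≤ ((dl:ℝ) - 1) * (u^2*v^3)) :
    3 * (1 - v) * u ^ 3 * v ^ 2 <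
      1 - (1-v) * (1 - u^3*v^2) - 3 / (dl:ℝ) * (t * (1 - u)) - u^3*v^3 - 3*(1-u)*u^2*v^3 := by
  have hdl0 : (0:ℝ) < (dl:ℝ) := by linarith
  have hups : 0 < u + u^2*v^3 := by positivity
  have h3dl : 3/(dl:ℝ) ≤ 3*(u^2*v^3)/(u + u^2*v^3) := by
    rw [div_le_div_iff₀ hdl0 hups]
    nlinarith [hber]
  have htu : 0 ≤ t * (1 - u) := mul_nonneg ht0.le (by linarith)
  have step1 : 3/(dl:ℝ) * (t*(1-u)) ≤ 3*(u^2*v^3)/(u + u^2*v^3) * (t*(1-u)) :=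
    mul_le_mul_of_nonneg_right h3dl htu
  have hteq : t = 1 - u^2*v^3 := by linarith
  have step2 : 3*(u^2*v^3)/(u + u^2*v^3) * (t*(1-u))
      < v - 2*u^3*v^2 + 4*u^3*v^3 - 3*u^2*v^3 := by
    rw [div_mul_eq_mul_div, div_lt_iff₀ hups, hteq]
    calc 3*(u^2*v^3) * ((1 - u^2*v^3)*(1-u)) = 3*(u^2*v^3)*(1 - u^2*v^3)*(1-u) := by ring
      _ < (v - 2*u^3*v^2 + 4*u^3*v^3 - 3*u^2*v^3) * (u + u^2*v^3) :=
          aux_poly u v hu0 hu1 hv0 hv1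
  nlinarith [step1, step2]

/-- For `(d_l,3,3)` MN codes with `d_l > 3`, the BEC potential at every
nontrivial fixed point is strictly positive. -/
theorem stmt4 (dl : ℕ) (hl : 3 < dl) :
    ∀ x₁ ∈ Set.Ioo (0:ℝ) 1,
      x2FP dl 3 3 x₁ ∈ Set.Icc (0:ℝ) 1 →
      phiFP dl 3 3 x₁ ∈ Set.Icc (0:ℝ) 1 →
      0 < UBEC dl 3 3 x₁ (x2FP dl 3 3 x₁) (phiFP dl 3 3 x₁) := by
  intro x₁ hx₁ hx2mem _hphimem
  obtain ⟨h0, h1⟩ := hx₁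
  have hdl4 : (4:ℝ) ≤ (dl:ℝ) := by exact_mod_cast hl
  have hdlpos : (0:ℝ) < (dl:ℝ) - 1 := by linarith
  obtain ⟨u, hu⟩ : ∃ u : ℝ, u = 1 - x₁ := ⟨_, rfl⟩
  have hu0 : 0 < u := by rw [hu]; linarith
  have hu1 : u < 1 := by rw [hu]; linarith
  obtain ⟨t, ht⟩ : ∃ t : ℝ, t = x₁ ^ ((1:ℝ)/((dl:ℝ)-1)) := ⟨_, rfl⟩
  have ht0 : 0 < t := ht ▸ Real.rpow_pos_of_pos h0 _
  have ht1 : t < 1 := by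
    rw [ht]
    exact Real.rpow_lt_one h0.le h1 (by positivity)
  obtain ⟨w, hw⟩ : ∃ w : ℝ, w = (1 - t) / u^2 := ⟨_, rfl⟩
  have hw0 : 0 < w := hw ▸ div_pos (by linarith) (by positivity)
  obtain ⟨v, hv⟩ : ∃ v : ℝ, v = w ^ ((1:ℝ)/3) := ⟨_, rfl⟩
  have hv0 : 0 < v := hv ▸ Real.rpow_pos_of_pos hw0 _
  have hx2eq : x2FP dl 3 3 x₁ = 1 - v := by
    rw [x2FP, hv, hw, ht, hu]
    norm_num
  have hv1 : v ≤ 1 := by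
    have := hx2mem.1
    rw [hx2eq] at this
    linarith
  have hv3 : v^3 = w := by
    rw [hv, ← Real.rpow_natCast (w ^ ((1:ℝ)/3)) 3, ← Real.rpow_mul hw0.le]
    norm_num
  have hs : u^2 * v^3 = 1 - t := by
    rw [hv3, hw]
    field_simp
  have hcast : ((dl - 1 : ℕ) : ℝ) = (dl:ℝ) - 1 := by
    have h' : 1 ≤ dl := by omega
    push_cast [Nat.cast_sub h']
    ring
  have htp : t ^ (dl - 1) = x₁ := by
    rw [ht, ← Real.rpow_natCast _ (dl-1), ← Real.rpow_mul h0.le, hcast, one_div,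
      inv_mul_cancel₀ (ne_of_gt hdlpos), Real.rpow_one]
  have htdl : t ^ dl = t * x₁ := by
    rw [show dl = (dl - 1) + 1 by omega, pow_succ, htp, mul_comm]
  -- Bernoulli ⇒ bound relating dl and u²v³
  have hber0 : 1 + ((dl-1:ℕ):ℝ) * (-(1-t)) ≤ (1 + (-(1-t)))^(dl-1) :=
    one_add_mul_le_pow (by linarith) (dl-1)
  have hber : u ≤ ((dl:ℝ) - 1) * (u^2*v^3) := by
    rw [hs]
    have h' : (1 : ℝ) + (-(1-t)) = t := by ring
    rw [h', htp, hcast] at hber0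
    nlinarith [hber0]
  -- rewrite the potential into plain-variable form
  have hv2 : v^2 ≤ 1 := by nlinarith
  have hu3 : u^3 < 1 := by nlinarith [mul_pos hu0 hu0]
  have hA1 : u^3*v^2 < 1 := by
    have h' := mul_le_of_le_one_right (pow_pos hu0 3).le hv2
    linarith
  have hAne : ((1:ℝ) - u^3*v^2) ≠ 0 := by linarith
  have hphi : phiFP dl 3 3 x₁ = (1-v) / (1 - u^3*v^2)^2 := by
    rw [phiFP, hx2eq, ← hu]
    norm_num
  have htgoal : ((1:ℝ) - u^2*v^3)^dl = t * x₁ := by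
    rw [show (1:ℝ) - u^2*v^3 = t by linarith [hs]]
    exact htdl
  rw [hx2eq, hphi, UBEC, ← hu]
  norm_num
  rw [htgoal]
  have hdiv : (1-v) / (1 - u^3*v^2)^2 * (1 - u^3*v^2)^3 = (1-v) * (1 - u^3*v^2) := by
    field_simp
  rw [hdiv, show x₁ = 1 - u by rw [hu]; ring]
  exact aux_main dl u v t hdl4 hu0 hu1 hv0 hv1 ht0 hs hber
end

section
/- Let d_l > d_r ≥ 2 and d_g ≥ 2 be integers and let φ be a GEC transfer function with integral Φ. Let x₁ ∈ (0,1) be such that x₂[x₁] ∈ [0,1], and let ε ∈ [0,1] satisfy φ(ψ[x₁]; ε) = φ[x₁]. Then the MN potential at the nontrivial fixed point dominates its BEC counterpart: U(x₁, x₂[x₁]; ε) ≥ U_BEC(x₁, x₂[x₁]; φ[x₁]), with equality when φ(x;ε) is constant in x. -/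
/-- The integral `Φ(x;ε) := ∫₀ˣ φ(t;ε) dt` of a GEC transfer function. -/
noncomputable def Phi (φ : ℝ → ℝ → ℝ) (x ε : ℝ) : ℝ := ∫ t in (0:ℝ)..x, φ t ε

/-- A GEC transfer function: maps `[0,1]×[0,1]` to `[0,1]`, continuous and
nondecreasing in `x` for each `ε`, strictly increasing in `ε` for each `x`. -/
def IsGEC (φ : ℝ → ℝ → ℝ) : Prop :=
  (∀ x ∈ Set.Icc (0:ℝ) 1, ∀ ε ∈ Set.Icc (0:ℝ) 1, φ x ε ∈ Set.Icc (0:ℝ) 1) ∧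
  (∀ ε ∈ Set.Icc (0:ℝ) 1, ContinuousOn (fun x => φ x ε) (Set.Icc (0:ℝ) 1) ∧
      MonotoneOn (fun x => φ x ε) (Set.Icc (0:ℝ) 1)) ∧
  (∀ x ∈ Set.Icc (0:ℝ) 1, StrictMonoOn (fun ε => φ x ε) (Set.Icc (0:ℝ) 1))

/-- The MN potential function `U(x₁,x₂;ε)` of the `(d_l,d_r,d_g)` MN code. -/
noncomputable def U (dl dr dg : ℕ) (φ : ℝ → ℝ → ℝ) (x₁ x₂ ε : ℝ) : ℝ :=
  1 - Phi φ ((1 - (1-x₁)^dr * (1-x₂)^(dg-1))^dg) ε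
    - ((dr : ℝ)/(dl : ℝ)) * (1 - (1-x₁)^(dr-1) * (1-x₂)^dg)^dl
    - (1-x₁)^dr * (1-x₂)^dg
    - (dr : ℝ) * x₁ * (1-x₁)^(dr-1) * (1-x₂)^dg
    - (dg : ℝ) * x₂ * (1-x₁)^dr * (1-x₂)^(dg-1)

/-- `ψ[x₁] := (1−(1−x₁)^{d_r}(1−x₂[x₁])^{d_g−1})^{d_g}`. -/
noncomputable def psiFP (dl dr dg : ℕ) (x₁ : ℝ) : ℝ :=
  (1 - (1-x₁)^dr * (1 - x2FP dl dr dg x₁)^(dg-1))^dg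

/-- At a nontrivial fixed point, the GEC potential dominates its BEC
counterpart, with equality when `φ(x;ε)` is constant in `x`. -/
theorem stmt6 (dl dr dg : ℕ) (hrl : dr < dl) (hr : 2 ≤ dr) (hg : 2 ≤ dg)
    (φ : ℝ → ℝ → ℝ) (hφ : IsGEC φ)
    (x₁ : ℝ) (hx₁ : x₁ ∈ Set.Ioo (0:ℝ) 1)
    (hx₂ : x2FP dl dr dg x₁ ∈ Set.Icc (0:ℝ) 1)
    (ε : ℝ) (hε : ε ∈ Set.Icc (0:ℝ) 1)
    (hfix : φ (psiFP dl dr dg x₁) ε = phiFP dl dr dg x₁) :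
    UBEC dl dr dg x₁ (x2FP dl dr dg x₁) (phiFP dl dr dg x₁)
      ≤ U dl dr dg φ x₁ (x2FP dl dr dg x₁) ε ∧
    ((∀ x ∈ Set.Icc (0:ℝ) 1, ∀ y ∈ Set.Icc (0:ℝ) 1, φ x ε = φ y ε) →
      UBEC dl dr dg x₁ (x2FP dl dr dg x₁) (phiFP dl dr dg x₁)
        = U dl dr dg φ x₁ (x2FP dl dr dg x₁) ε) := by

  obtain ⟨hrange, hmono, -⟩ := hφ
  set x₂ := x2FP dl dr dg x₁ with hx2def
  set ψ := psiFP dl dr dg x₁ with hψdef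
  obtain ⟨hx10, hx11⟩ := hx₁
  obtain ⟨hx20, hx21⟩ := hx₂
  have h1x₁ : (0:ℝ) ≤ 1 - x₁ := by linarith
  have h1x₁' : 1 - x₁ ≤ 1 := by linarith
  have h1x₂ : (0:ℝ) ≤ 1 - x₂ := by linarith
  have h1x₂' : 1 - x₂ ≤ 1 := by linarith
  have ha0 : (0:ℝ) ≤ (1-x₁)^dr * (1-x₂)^(dg-1) :=
    mul_nonneg (pow_nonneg h1x₁ _) (pow_nonneg h1x₂ _)
  have ha1 : (1-x₁)^dr * (1-x₂)^(dg-1) ≤ 1 := by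
    calc (1-x₁)^dr * (1-x₂)^(dg-1) ≤ 1 * 1 :=
          mul_le_mul (pow_le_one₀ h1x₁ h1x₁') (pow_le_one₀ h1x₂ h1x₂')
            (pow_nonneg h1x₂ _) zero_le_one
      _ = 1 := by ring
  have hψ0 : (0:ℝ) ≤ ψ := by
    rw [hψdef, psiFP]; exact pow_nonneg (by linarith) _
  have hψ1 : ψ ≤ 1 := by
    rw [hψdef, psiFP]; exact pow_le_one₀ (by linarith) (by linarith)
  have hψmem : ψ ∈ Set.Icc (0:ℝ) 1 := ⟨hψ0, hψ1⟩
  have hsub : Set.Icc (0:ℝ) ψ ⊆ Set.Icc (0:ℝ) 1 :=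
    Set.Icc_subset_Icc le_rfl hψ1
  obtain ⟨hcont, hmon⟩ := hmono ε hε
  have hint : IntervalIntegrable (fun t => φ t ε) MeasureTheory.volume 0 ψ := by
    exact (hcont.mono hsub).intervalIntegrable_of_Icc hψ0
  have hintc : IntervalIntegrable (fun _ : ℝ => φ ψ ε) MeasureTheory.volume 0 ψ :=
    intervalIntegrable_const
  have hle : Phi φ ψ ε ≤ φ ψ ε * ψ := by
    have := intervalIntegral.integral_mono_on hψ0 hint hintc
      (fun t ht => hmon (hsub ht) hψmem ht.2)
    rw [intervalIntegral.integral_const] at this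
    simpa [Phi, mul_comm] using this
  have hpsiU : ((1 - (1-x₁)^dr * (1-x₂)^(dg-1))^dg) = ψ := rfl
  constructor
  · rw [U, UBEC, hpsiU, ← hfix]
    linarith
  · intro hconst
    have heq : Phi φ ψ ε = φ ψ ε * ψ := by
      have : (∫ t in (0:ℝ)..ψ, φ t ε) = ∫ _ in (0:ℝ)..ψ, φ ψ ε := by
        apply intervalIntegral.integral_congr
        intro t ht
        rw [Set.uIcc_of_le hψ0] at ht
        exact hconst t (hsub ht) ψ hψmem
      rw [Phi, this, intervalIntegral.integral_const]
      simp [mul_comm]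
    rw [U, UBEC, hpsiU, ← hfix]
    linarith
end

section
/- Let (d_r,d_g) be either (2,2) or (3,3), let d_l > d_r be an integer, and let φ be a GEC transfer function with integral Φ. Let x₁ ∈ (0,1) be such that x₂[x₁] ∈ [0,1], and let ε ∈ [0,1] satisfy φ(ψ[x₁]; ε) = φ[x₁] (so (x₁, x₂[x₁]) is a nontrivial fixed point of the MN density evolution at channel parameter ε). Then U(x₁, x₂[x₁]; ε) > 0. -/
-- Phi upper bound lemma
lemma Phi_le (φ : ℝ → ℝ → ℝ) (hφ : IsGEC φ) (ψ ε : ℝ) (hψ : ψ ∈ Set.Icc (0:ℝ) 1)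
    (hε : ε ∈ Set.Icc (0:ℝ) 1) : Phi φ ψ ε ≤ ψ * φ ψ ε := by
  obtain ⟨hψ0, hψ1⟩ := hψ
  have hcont := (hφ.2.1 ε hε).1
  have hmono := (hφ.2.1 ε hε).2
  have hsub : Set.Icc (0:ℝ) ψ ⊆ Set.Icc (0:ℝ) 1 := Set.Icc_subset_Icc le_rfl hψ1
  have hint : IntervalIntegrable (fun t => φ t ε) MeasureTheory.volume 0 ψ :=
    (by rw [Set.uIcc_of_le hψ0]; exact hcont.mono hsub :
      ContinuousOn (fun t => φ t ε) (Set.uIcc 0 ψ)).intervalIntegrable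
  have h1 : ∫ t in (0:ℝ)..ψ, φ t ε ≤ ∫ _t in (0:ℝ)..ψ, φ ψ ε := by
    apply intervalIntegral.integral_mono_on hψ0 hint intervalIntegrable_const
    intro t ht
    exact hmono ⟨ht.1, ht.2.trans hψ1⟩ ⟨hψ0, hψ1⟩ ht.2
  simpa [Phi, intervalIntegral.integral_const, smul_eq_mul] using h1
set_option maxHeartbeats 1000000 in

lemma key2 (n : ℕ) (hn : 3 ≤ n) (s a u v b : ℝ) (hs0 : 0 < s) (hs1 : s < 1)
    (hu0 : 0 ≤ u) (hv0 : 0 < v) (hu2 : u^2 = 1 - s) (hv2 : v^2 = a)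
    (ha : a = 1 - s^(n-1)) (hb0 : 0 ≤ b) (hvb : v * b = u) :
    0 < 1 - (1 - a^2*b)*(1-b) - (2/(n:ℝ))*s^n - a^2*b^2 - 2*(1-a)*a*b^2 - 2*(1-b)*(a^2*b) := by
  have hnR : (3:ℝ) ≤ (n:ℝ) := by exact_mod_cast hn
  have hnpos : (0:ℝ) < (n:ℝ) := by linarith
  obtain rfl : a = v^2 := hv2.symm
  have hu0' : 0 < u := by nlinarith
  have hx1 : 1 - v^2 = s^(n-1) := by linarith
  have hx1nn : 0 ≤ 1 - v^2 := by rw [hx1]; positivity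
  have hgoal_eq : 1 - (1 - (v^2)^2*b)*(1-b) - (2/(n:ℝ))*s^n - (v^2)^2*b^2
      - 2*(1-v^2)*(v^2)*b^2 - 2*(1-b)*((v^2)^2*b)
      = (1-v^2)*((1+v^2)*b - 2*u^2) - (2/(n:ℝ))*s^n := by
    linear_combination (-2*(1-v^2)*(v*b+u)) * hvb
  rw [hgoal_eq]
  -- (1+v^2)*b - 2*u^2 ≥ s*b = (1-u^2)*b
  have e1 : v * ((1+v^2)*b - 2*u^2 - (1-u^2)*b) = u*(u-v)^2 := by
    linear_combination (v^2 + u^2) * hvb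
  have hbr : (1-u^2)*b ≤ (1+v^2)*b - 2*u^2 := by
    have h := (mul_nonneg_iff_of_pos_left hv0).mp
      (by rw [e1]; positivity : 0 ≤ v * ((1+v^2)*b - 2*u^2 - (1-u^2)*b))
    linarith
  have h2 : s^n * b ≤ (1-v^2)*((1+v^2)*b - 2*u^2) := by
    have hsn : s^n = s^(n-1) * s := by rw [← pow_succ]; congr 1; omega
    calc s^n * b = s^(n-1) * ((1-u^2)*b) := by rw [hsn, hu2]; ring
    _ = (1-v^2) * ((1-u^2)*b) := by rw [hx1]
    _ ≤ (1-v^2)*((1+v^2)*b - 2*u^2) := mul_le_mul_of_nonneg_left hbr hx1nn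
  -- b > 2/n
  have hvlt : 2*v < (n:ℝ)*u := by
    have hbern : 1 + ((n-1:ℕ):ℝ)*(s-1) ≤ s^(n-1) := by
      simpa using one_add_mul_le_pow (a := s-1) (by linarith) (n-1)
    have hcast : ((n-1:ℕ):ℝ) = (n:ℝ) - 1 := by
      have h1 : 1 ≤ n := by omega
      push_cast [Nat.cast_sub h1]; ring
    rw [hcast] at hbern
    have hsq : (2*v)^2 < ((n:ℝ)*u)^2 := by
      have h4 : 4*(1 - s^(n-1)) ≤ 4*((n:ℝ)-1)*(1-s) := by nlinarith
      have h5 : 4*((n:ℝ)-1)*(1-s) < (n:ℝ)^2*(1-s) := by nlinarith [sq_nonneg ((n:ℝ)-2)]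
      have hv2' : v^2 = 1 - s^(n-1) := by linarith
      calc (2*v)^2 = 4*(1-s^(n-1)) := by rw [← hv2']; ring
      _ < (n:ℝ)^2*(1-s) := by linarith
      _ = ((n:ℝ)*u)^2 := by rw [← hu2]; ring
    exact lt_of_pow_lt_pow_left₀ 2 (by positivity) hsq
  have hbgt : 2/(n:ℝ) < b := by
    rw [div_lt_iff₀ hnpos]
    have : 2*v < (n:ℝ)*(v*b) := by rw [hvb]; exact hvlt
    nlinarith
  have hsnpos : 0 < s^n := pow_pos hs0 n
  nlinarith [mul_lt_mul_of_pos_left hbgt hsnpos]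
set_option maxHeartbeats 1000000 in
lemma key3 (n : ℕ) (hn : 4 ≤ n) (s a u v b : ℝ) (hs0 : 0 < s) (hs1 : s < 1)
    (hu0 : 0 ≤ u) (hv0 : 0 < v) (hu3 : u^3 = 1 - s) (hv3 : v^3 = a)
    (ha : a = 1 - s^(n-1)) (hb0 : 0 ≤ b) (hvb : v^2 * b = u) :
    0 < 1 - (1 - a^3*b^2)*(1-b) - (3/(n:ℝ))*s^n - a^3*b^3 - 3*(1-a)*a^2*b^3
        - 3*(1-b)*(a^3*b^2) := by
  have hnR : (4:ℝ) ≤ (n:ℝ) := by exact_mod_cast hn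
  have hnpos : (0:ℝ) < (n:ℝ) := by linarith
  obtain rfl : a = v^3 := hv3.symm
  have hu0' : 0 < u := by
    refine lt_of_pow_lt_pow_left₀ 3 hu0 ?_
    have h0 : ((0:ℝ))^3 = 0 := by norm_num
    rw [h0, hu3]; linarith
  have hx1 : 1 - v^3 = s^(n-1) := by linarith
  have hx1nn : 0 ≤ 1 - v^3 := by rw [hx1]; positivity
  have hgoal_eq : 1 - (1 - (v^3)^3*b^2)*(1-b) - (3/(n:ℝ))*s^n - (v^3)^3*b^3
      - 3*(1-v^3)*(v^3)^2*b^3 - 3*(1-b)*((v^3)^3*b^2)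
      = (1-v^3)*((1+v^3+v^6)*b - 3*u^3) + v^9*b*(1-b)^2 - (3/(n:ℝ))*s^n := by
    linear_combination (-3*(1-v^3)*((v^2*b)^2 + v^2*b*u + u^2)) * hvb
  rw [hgoal_eq]
  have hnonneg : 0 ≤ v^9*b*(1-b)^2 := by positivity
  -- core estimate: v^2 * ((1+v^3+v^6)*b - 3*u^3) = u*(1+v^3+v^6-3*u^2*v^2)
  have e1 : v^2 * ((1+v^3+v^6)*b - 3*u^3) = u*(1+v^3+v^6-3*u^2*v^2) := by
    linear_combination (1+v^3+v^6) * hvb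
  have hAM : 3*u^2*v^2 ≤ 2*u^3 + v^6 := by
    nlinarith [mul_nonneg (sq_nonneg (u - v^2)) (by positivity : (0:ℝ) ≤ 2*u + v^2)]
  have hs2 : s^(n-1) ≤ s^2 := by
    apply pow_le_pow_of_le_one hs0.le hs1.le; omega
  have hbig : s*(2-s) ≤ 1+v^3+v^6-3*u^2*v^2 := by
    have h1 : 1 + v^3 - 2*u^3 = 2*s - s^(n-1) := by
      rw [← hx1]; linarith [hu3]
    nlinarith
  -- b > (3/n) / (2-s)  equivalently  n*(2-s)*u > 3*v^2
  have hpoly : 27*((n:ℝ)-1)^2 ≤ 4*(n:ℝ)^3 := by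
    nlinarith [mul_nonneg (mul_nonneg (by linarith : (0:ℝ) ≤ (n:ℝ)-4) (by linarith : (0:ℝ) ≤ (n:ℝ)-4)) (by linarith : (0:ℝ) ≤ (n:ℝ)-4), sq_nonneg ((n:ℝ)-4)]
  have hbern : 1 - s^(n-1) ≤ ((n:ℝ)-1)*(1-s) := by
    have hb2 : 1 + ((n-1:ℕ):ℝ)*(s-1) ≤ s^(n-1) := by
      simpa using one_add_mul_le_pow (a := s-1) (by linarith) (n-1)
    have hcast : ((n-1:ℕ):ℝ) = (n:ℝ) - 1 := by
      have h1 : 1 ≤ n := by omega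
      push_cast [Nat.cast_sub h1]; ring
    rw [hcast] at hb2; linarith
  have hx1le1 : s^(n-1) ≤ 1 := pow_le_one₀ hs0.le hs1.le
  have hcube : (3*v^2)^3 < ((n:ℝ)*(2-s)*u)^3 := by
    have hv6 : (3*v^2)^3 = 27*(1-s^(n-1))^2 := by rw [← hx1]; ring
    have hr : ((n:ℝ)*(2-s)*u)^3 = (n:ℝ)^3*(2-s)^3*(1-s) := by rw [← hu3]; ring
    rw [hv6, hr]
    set w : ℝ := 1 - s with hw
    have hw0 : 0 < w := by simp [hw]; linarith
    have hw1 : w < 1 := by simp [hw]; linarith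
    have hc1 : 27*(1-s^(n-1))^2 ≤ 27*(((n:ℝ)-1)*w)^2 * 1 := by
      have := pow_le_pow_left₀ (by linarith : (0:ℝ) ≤ 1 - s^(n-1)) hbern 2
      nlinarith
    have hc2 : 27*(((n:ℝ)-1)*w)^2 * 1 < (n:ℝ)^3*(2-s)^3*w := by
      have h2s : (2-s) = 1 + w := by simp [hw]; ring
      rw [h2s]
      have hcube1 : 1 + 3*w ≤ (1+w)^3 := by nlinarith [sq_nonneg w]
      have hlin : 27*((n:ℝ)-1)^2*w < (n:ℝ)^3*(1+3*w) := by
        nlinarith [mul_pos (by positivity : (0:ℝ) < (n:ℝ)^3) (by linarith : (0:ℝ) < 1 - w),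
          mul_nonneg (by linarith : (0:ℝ) ≤ 4*(n:ℝ)^3 - 27*((n:ℝ)-1)^2) hw0.le]
      calc 27*(((n:ℝ)-1)*w)^2*1 = (27*((n:ℝ)-1)^2*w)*w := by ring
      _ < ((n:ℝ)^3*(1+3*w))*w := by exact mul_lt_mul_of_pos_right hlin hw0
      _ ≤ ((n:ℝ)^3*(1+w)^3)*w := by nlinarith [mul_pos hw0 (by positivity : (0:ℝ) < (n:ℝ)^3)]
      _ = (n:ℝ)^3*(1+w)^3*w := by ring
    linarith
  have h3v : 3*v^2 < (n:ℝ)*(2-s)*u := by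
    refine lt_of_pow_lt_pow_left₀ 3 ?_ hcube
    have : 0 < 2 - s := by linarith
    positivity
  -- conclude
  have hkey : (3/(n:ℝ))*s^n < (1-v^3)*((1+v^3+v^6)*b - 3*u^3) := by
    have hv2pos : (0:ℝ) < v^2 := by positivity
    rw [← mul_lt_mul_iff_right₀ hv2pos]
    have hrhs : v^2 * ((1-v^3)*((1+v^3+v^6)*b - 3*u^3))
        = s^(n-1) * (u*(1+v^3+v^6-3*u^2*v^2)) := by
      rw [← hx1]; linear_combination (1-v^3)*e1
    rw [hrhs]
    have hstep : s^(n-1) * (u*(s*(2-s))) ≤ s^(n-1) * (u*(1+v^3+v^6-3*u^2*v^2)) := by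
      apply mul_le_mul_of_nonneg_left _ (by positivity)
      exact mul_le_mul_of_nonneg_left hbig hu0
    have hlhs : v^2*((3/(n:ℝ))*s^n) < s^(n-1)*(u*(s*(2-s))) := by
      have hsn : s^n = s^(n-1) * s := by rw [← pow_succ]; congr 1; omega
      rw [hsn]
      have hfactor : s^(n-1)*(u*(s*(2-s))) - v^2*((3/(n:ℝ))*(s^(n-1)*s))
          = s^(n-1)*s*(u*(2-s) - 3*v^2/(n:ℝ)) := by ring
      have hpos : 0 < u*(2-s) - 3*v^2/(n:ℝ) := by
        rw [sub_pos, div_lt_iff₀ hnpos]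
        nlinarith
      nlinarith [mul_pos (mul_pos (pow_pos hs0 (n-1)) hs0) hpos]
    linarith
  linarith

set_option maxHeartbeats 1000000 in
lemma main2 (dl : ℕ) (hdl : 2 < dl) (φ : ℝ → ℝ → ℝ) (hφ : IsGEC φ)
    (x₁ : ℝ) (hx₁ : x₁ ∈ Set.Ioo (0:ℝ) 1)
    (hx₂ : x2FP dl 2 2 x₁ ∈ Set.Icc (0:ℝ) 1)
    (ε : ℝ) (hε : ε ∈ Set.Icc (0:ℝ) 1)
    (hfix : φ (psiFP dl 2 2 x₁) ε = phiFP dl 2 2 x₁) :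
    0 < U dl 2 2 φ x₁ (x2FP dl 2 2 x₁) ε := by
  obtain ⟨hx0, hx1'⟩ := hx₁
  have hn3 : 3 ≤ dl := hdl
  have hdlR : (3:ℝ) ≤ (dl:ℝ) := by exact_mod_cast hn3
  have hdl1 : (0:ℝ) < (dl:ℝ) - 1 := by linarith
  set a : ℝ := 1 - x₁ with ha
  have ha0 : 0 < a := by simp [ha]; linarith
  have ha1 : a < 1 := by simp [ha]; linarith
  set s : ℝ := x₁ ^ ((1:ℝ)/((dl:ℝ)-1)) with hs
  have hs0 : 0 < s := Real.rpow_pos_of_pos hx0 _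
  have hs1 : s < 1 := Real.rpow_lt_one hx0.le hx1' (by positivity)
  have hspow : s ^ (dl - 1) = x₁ := by
    rw [hs, ← Real.rpow_natCast (x₁ ^ ((1:ℝ)/((dl:ℝ)-1))) (dl-1), ← Real.rpow_mul hx0.le]
    rw [show ((1:ℝ)/((dl:ℝ)-1)) * ((dl-1 : ℕ):ℝ) = 1 by
      rw [Nat.cast_sub (by omega : 1 ≤ dl)]
      push_cast
      field_simp]
    exact Real.rpow_one x₁
  set x₂ : ℝ := x2FP dl 2 2 x₁ with hx2def
  set b : ℝ := 1 - x₂ with hbdef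
  have hb0 : 0 ≤ b := by simp [hbdef]; linarith [hx₂.2]
  have hb1 : b ≤ 1 := by simp [hbdef]; linarith [hx₂.1]
  have hbval : b = ((1-s)/a) ^ ((1:ℝ)/2) := by
    rw [hbdef, hx2def, x2FP, ← hs, ← ha]
    norm_num
  have hbase : 0 ≤ (1-s)/a := div_nonneg (by linarith) ha0.le
  have hb2 : b^2 = (1-s)/a := by
    rw [hbval, ← Real.rpow_natCast (((1-s)/a) ^ ((1:ℝ)/2)) 2, ← Real.rpow_mul hbase]
    norm_num
  have hab : a * b^2 = 1 - s := by rw [hb2]; field_simp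
  set u : ℝ := Real.sqrt (1-s) with hu
  set v : ℝ := Real.sqrt a with hv
  have hu2 : u^2 = 1-s := Real.sq_sqrt (by linarith)
  have hv2 : v^2 = a := Real.sq_sqrt ha0.le
  have hu0 : 0 ≤ u := Real.sqrt_nonneg _
  have hv0 : 0 < v := Real.sqrt_pos.2 ha0
  have hvb : v * b = u := by
    have hsq : (v*b)^2 = u^2 := by rw [mul_pow, hv2, hu2, hab]
    calc v*b = Real.sqrt ((v*b)^2) := (Real.sqrt_sq (by positivity)).symm
    _ = Real.sqrt (u^2) := by rw [hsq]
    _ = u := Real.sqrt_sq hu0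
  have haval : a = 1 - s^(dl-1) := by rw [hspow, ha]
  -- the z-quantity
  have hz0 : 0 ≤ a^2*b := by positivity
  have hz1 : a^2*b < 1 := by nlinarith
  have hzpos : 0 < 1 - a^2*b := by linarith
  -- rewrite psiFP, phiFP
  have hψeq : psiFP dl 2 2 x₁ = (1 - a^2*b)^2 := by
    rw [psiFP, ← hx2def, ← ha, ← hbdef]
    norm_num
  have hφeq : phiFP dl 2 2 x₁ = x₂ / (1 - a^2*b) := by
    rw [phiFP, ← hx2def, ← ha, ← hbdef]
    norm_num
  -- the Phi bound
  have hψmem : (1 - a^2*b)^2 ∈ Set.Icc (0:ℝ) 1 := by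
    constructor
    · positivity
    · nlinarith
  have hPhile : Phi φ ((1 - a^2*b)^2) ε ≤ (1 - a^2*b) * x₂ := by
    have h1 := Phi_le φ hφ ((1 - a^2*b)^2) ε hψmem hε
    have h2 : φ ((1 - a^2*b)^2) ε = x₂ / (1 - a^2*b) := by
      rw [← hψeq, hfix, hφeq]
    rw [h2] at h1
    calc Phi φ ((1 - a^2*b)^2) ε ≤ (1 - a^2*b)^2 * (x₂ / (1 - a^2*b)) := h1
    _ = (1 - a^2*b) * x₂ := by field_simp
  -- rewrite U
  have hU : U dl 2 2 φ x₁ x₂ ε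
      = 1 - Phi φ ((1 - a^2*b)^2) ε - (2/(dl:ℝ))*s^dl - a^2*b^2
        - 2*(1-a)*a*b^2 - 2*x₂*(a^2*b) := by
    rw [U, ← ha, ← hbdef]
    have hw : (1:ℝ) - a * b^2 = s := by linarith
    norm_num [hw]
    ring
  rw [hU]
  have hkey := key2 dl hn3 s a u v b hs0 hs1 hu0 hv0 hu2 hv2 haval hb0 hvb
  have hx2b : x₂ = 1 - b := by rw [hbdef]; ring
  rw [hx2b] at hPhile ⊢
  clear_value a s x₂ b u v
  linarith [hkey, hPhile]

set_option maxHeartbeats 1000000 in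
lemma main3 (dl : ℕ) (hdl : 3 < dl) (φ : ℝ → ℝ → ℝ) (hφ : IsGEC φ)
    (x₁ : ℝ) (hx₁ : x₁ ∈ Set.Ioo (0:ℝ) 1)
    (hx₂ : x2FP dl 3 3 x₁ ∈ Set.Icc (0:ℝ) 1)
    (ε : ℝ) (hε : ε ∈ Set.Icc (0:ℝ) 1)
    (hfix : φ (psiFP dl 3 3 x₁) ε = phiFP dl 3 3 x₁) :
    0 < U dl 3 3 φ x₁ (x2FP dl 3 3 x₁) ε := by
  obtain ⟨hx0, hx1'⟩ := hx₁
  have hn4 : 4 ≤ dl := hdl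
  have hdlR : (4:ℝ) ≤ (dl:ℝ) := by exact_mod_cast hn4
  have hdl1 : (0:ℝ) < (dl:ℝ) - 1 := by linarith
  set a : ℝ := 1 - x₁ with ha
  have ha0 : 0 < a := by simp [ha]; linarith
  have ha1 : a < 1 := by simp [ha]; linarith
  set s : ℝ := x₁ ^ ((1:ℝ)/((dl:ℝ)-1)) with hs
  have hs0 : 0 < s := Real.rpow_pos_of_pos hx0 _
  have hs1 : s < 1 := Real.rpow_lt_one hx0.le hx1' (by positivity)
  have hspow : s ^ (dl - 1) = x₁ := by
    rw [hs, ← Real.rpow_natCast (x₁ ^ ((1:ℝ)/((dl:ℝ)-1))) (dl-1), ← Real.rpow_mul hx0.le]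
    rw [show ((1:ℝ)/((dl:ℝ)-1)) * ((dl-1 : ℕ):ℝ) = 1 by
      rw [Nat.cast_sub (by omega : 1 ≤ dl)]
      push_cast
      field_simp]
    exact Real.rpow_one x₁
  set x₂ : ℝ := x2FP dl 3 3 x₁ with hx2def
  set b : ℝ := 1 - x₂ with hbdef
  have hb0 : 0 ≤ b := by simp [hbdef]; linarith [hx₂.2]
  have hb1 : b ≤ 1 := by simp [hbdef]; linarith [hx₂.1]
  have hbval : b = ((1-s)/a^2) ^ ((1:ℝ)/3) := by
    rw [hbdef, hx2def, x2FP, ← hs, ← ha]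
    norm_num
  have hbase : 0 ≤ (1-s)/a^2 := div_nonneg (by linarith) (by positivity)
  have hb3 : b^3 = (1-s)/a^2 := by
    rw [hbval, ← Real.rpow_natCast (((1-s)/a^2) ^ ((1:ℝ)/3)) 3, ← Real.rpow_mul hbase]
    norm_num
  have hab : a^2 * b^3 = 1 - s := by rw [hb3]; field_simp
  set u : ℝ := (1-s) ^ ((1:ℝ)/3) with hu
  set v : ℝ := a ^ ((1:ℝ)/3) with hv
  have hu3 : u^3 = 1-s := by
    rw [hu, ← Real.rpow_natCast ((1-s) ^ ((1:ℝ)/3)) 3, ← Real.rpow_mul (by linarith)]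
    norm_num
  have hv3 : v^3 = a := by
    rw [hv, ← Real.rpow_natCast (a ^ ((1:ℝ)/3)) 3, ← Real.rpow_mul ha0.le]
    norm_num
  have hu0 : 0 ≤ u := Real.rpow_nonneg (by linarith) _
  have hv0 : 0 < v := Real.rpow_pos_of_pos ha0 _
  have hvb : v^2 * b = u := by
    have hsq : (v^2*b)^3 = u^3 := by
      rw [hu3]
      calc (v^2*b)^3 = (v^3)^2 * b^3 := by ring
      _ = a^2*b^3 := by rw [hv3]
      _ = 1 - s := hab
    exact le_antisymm (le_of_pow_le_pow_left₀ (by norm_num) hu0 hsq.le)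
      (le_of_pow_le_pow_left₀ (by norm_num) (by positivity) hsq.ge)
  have haval : a = 1 - s^(dl-1) := by rw [hspow, ha]
  have hz0 : 0 ≤ a^3*b^2 := by positivity
  have hz1 : a^3*b^2 < 1 := by
    have hb2le : b^2 ≤ 1 := by nlinarith
    have ha3lt : a^3 < 1 := by nlinarith
    have h := mul_le_of_le_one_right (pow_pos ha0 3).le hb2le
    linarith
  have hzpos : 0 < 1 - a^3*b^2 := by linarith
  have hψeq : psiFP dl 3 3 x₁ = (1 - a^3*b^2)^3 := by
    rw [psiFP, ← hx2def, ← ha, ← hbdef]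
  have hφeq : phiFP dl 3 3 x₁ = x₂ / (1 - a^3*b^2)^2 := by
    rw [phiFP, ← hx2def, ← ha, ← hbdef]
  have hψmem : (1 - a^3*b^2)^3 ∈ Set.Icc (0:ℝ) 1 := by
    constructor
    · positivity
    · nlinarith
  have hPhile : Phi φ ((1 - a^3*b^2)^3) ε ≤ (1 - a^3*b^2) * x₂ := by
    have h1 := Phi_le φ hφ ((1 - a^3*b^2)^3) ε hψmem hε
    have h2 : φ ((1 - a^3*b^2)^3) ε = x₂ / (1 - a^3*b^2)^2 := by
      rw [← hψeq, hfix, hφeq]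
    rw [h2] at h1
    calc Phi φ ((1 - a^3*b^2)^3) ε ≤ (1 - a^3*b^2)^3 * (x₂ / (1 - a^3*b^2)^2) := h1
    _ = (1 - a^3*b^2) * x₂ := by field_simp
  have hU : U dl 3 3 φ x₁ x₂ ε
      = 1 - Phi φ ((1 - a^3*b^2)^3) ε - (3/(dl:ℝ))*s^dl - a^3*b^3
        - 3*(1-a)*a^2*b^3 - 3*x₂*(a^3*b^2) := by
    rw [U, ← ha, ← hbdef]
    have hw : (1:ℝ) - a^2 * b^3 = s := by linarith
    norm_num [hw]
    ring
  rw [hU]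
  have hkey := key3 dl hn4 s a u v b hs0 hs1 hu0 hv0 hu3 hv3 haval hb0 hvb
  have hx2b : x₂ = 1 - b := by rw [hbdef]; ring
  rw [hx2b] at hPhile ⊢
  clear_value a s x₂ b u v
  linarith [hkey, hPhile]

/-- For `(d_r,d_g) ∈ {(2,2),(3,3)}` and `d_l > d_r`, the MN potential of any
GEC is strictly positive at every nontrivial fixed point. -/
theorem stmt7 (dl dr dg : ℕ)
    (hdeg : (dr = 2 ∧ dg = 2) ∨ (dr = 3 ∧ dg = 3)) (hrl : dr < dl)
    (φ : ℝ → ℝ → ℝ) (hφ : IsGEC φ)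
    (x₁ : ℝ) (hx₁ : x₁ ∈ Set.Ioo (0:ℝ) 1)
    (hx₂ : x2FP dl dr dg x₁ ∈ Set.Icc (0:ℝ) 1)
    (ε : ℝ) (hε : ε ∈ Set.Icc (0:ℝ) 1)
    (hfix : φ (psiFP dl dr dg x₁) ε = phiFP dl dr dg x₁) :
    0 < U dl dr dg φ x₁ (x2FP dl dr dg x₁) ε := by
  rcases hdeg with ⟨h2, h2'⟩ | ⟨h3, h3'⟩
  · subst h2; subst h2'
    exact main2 dl hrl φ hφ x₁ hx₁ hx₂ ε hε hfix
  · subst h3; subst h3'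
    exact main3 dl hrl φ hφ x₁ hx₁ hx₂ ε hε hfix
end

section
/- Let d_l > d_r ≥ 2 and d_g ≥ 2 be integers and let φ be a GEC transfer function with integral Φ. Every nonzero fixed point of the (d_l,d_r,d_g) MN density evolution at parameter ε ∈ [0,1] is either the trivial fixed point (1, φ(1;ε)) or has the parametric form (x₁, x₂[x₁]) for some x₁ ∈ (0,1) with x₂[x₁] ∈ [0,1]; that is, if (x₁,x₂) ∈ [0,1]² \ {(0,0)} satisfies (x₁,x₂) = f(g(x₁,x₂); ε), then either x₁ = 1 and x₂ = φ(1;ε), or x₁ ∈ (0,1) and x₂ = x₂[x₁]. -/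
/-- The map `f(x₁,x₂;ε) := (x₁^{d_l−1}, φ(x₂^{d_g};ε)·x₂^{d_g−1})` of the MN
density evolution. -/
noncomputable def fDE (dl dg : ℕ) (φ : ℝ → ℝ → ℝ) (x₁ x₂ ε : ℝ) : ℝ × ℝ :=
  (x₁^(dl-1), φ (x₂^dg) ε * x₂^(dg-1))

/-- The map `g(x₁,x₂) := (1−(1−x₁)^{d_r−1}(1−x₂)^{d_g}, 1−(1−x₁)^{d_r}(1−x₂)^{d_g−1})`
of the MN density evolution. -/
def gDE (dr dg : ℕ) (x₁ x₂ : ℝ) : ℝ × ℝ :=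
  (1 - (1-x₁)^(dr-1) * (1-x₂)^dg, 1 - (1-x₁)^dr * (1-x₂)^(dg-1))

/-- Every nonzero fixed point of the `(d_l,d_r,d_g)` MN density evolution is
either the trivial fixed point `(1, φ(1;ε))` or of the form `(x₁, x₂[x₁])`
for some `x₁ ∈ (0,1)`. -/
theorem stmt9 (dl dr dg : ℕ) (hrl : dr < dl) (hr : 2 ≤ dr) (hg : 2 ≤ dg)
    (φ : ℝ → ℝ → ℝ) (hφ : IsGEC φ)
    (ε : ℝ) (hε : ε ∈ Set.Icc (0:ℝ) 1)
    (x₁ x₂ : ℝ) (hx₁ : x₁ ∈ Set.Icc (0:ℝ) 1) (hx₂ : x₂ ∈ Set.Icc (0:ℝ) 1)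
    (hne : (x₁, x₂) ≠ (0, 0))
    (hfix : (x₁, x₂) = fDE dl dg φ (gDE dr dg x₁ x₂).1 (gDE dr dg x₁ x₂).2 ε) :
    (x₁ = 1 ∧ x₂ = φ 1 ε) ∨ (x₁ ∈ Set.Ioo (0:ℝ) 1 ∧ x₂ = x2FP dl dr dg x₁) := by
  have h1 : x₁ = (1 - (1-x₁)^(dr-1) * (1-x₂)^dg)^(dl-1) := congrArg Prod.fst hfix
  have h2 : x₂ = φ ((1 - (1-x₁)^dr * (1-x₂)^(dg-1))^dg) ε * (1 - (1-x₁)^dr * (1-x₂)^(dg-1))^(dg-1) :=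
    congrArg Prod.snd hfix
  rw [show (x₁ ∈ Set.Ioo (0:ℝ) 1 ∧ x₂ = x2FP dl dr dg x₁) ↔ (x₁ ∈ Set.Ioo (0:ℝ) 1 ∧
      x₂ = 1 - ((1 - x₁ ^ ((1:ℝ)/((dl:ℝ) - 1))) / (1-x₁)^(dr-1)) ^ ((1:ℝ)/(dg:ℝ))) from
    by rw [x2FP]]
  clear hfix
  obtain ⟨hx₁0, hx₁1⟩ := hx₁
  obtain ⟨hx₂0, hx₂1⟩ := hx₂
  have hdl3 : 3 ≤ dl := by omega
  by_cases hx1eq : x₁ = 1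
  · left
    refine ⟨hx1eq, ?_⟩
    subst hx1eq
    have hdr : dr ≠ 0 := by omega
    rw [show (1:ℝ) - 1 = 0 by ring, zero_pow hdr] at h2
    simpa using h2
  · right
    have hx₁lt : x₁ < 1 := lt_of_le_of_ne hx₁1 hx1eq
    have ha0 : (0:ℝ) < 1 - x₁ := by linarith
    have hb0 : (0:ℝ) ≤ 1 - x₂ := by linarith
    have hb1 : 1 - x₂ ≤ 1 := by linarith
    have hx1pos : 0 < x₁ := by
      rcases lt_or_eq_of_le hx₁0 with h | h
      · exact h
      · exfalso
        rw [← h, show (1:ℝ) - 0 = 1 by ring, one_pow, one_mul] at h1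
        have h1' : (1 - (1-x₂)^dg) = 0 := by
          have := pow_eq_zero_iff (n := dl - 1) (by omega) |>.mp h1.symm
          exact this
        have hpow1 : (1-x₂)^dg = 1 := by linarith
        have hx2 : x₂ = 0 := by
          by_contra hx2ne
          have hlt : 1 - x₂ < 1 := by
            rcases lt_or_eq_of_le hx₂0 with h' | h'
            · linarith
            · exact absurd h'.symm hx2ne
          have : (1-x₂)^dg < 1 := pow_lt_one₀ hb0 hlt (by omega)
          linarith
        exact hne (by rw [← h, hx2])
    refine ⟨⟨hx1pos, hx₁lt⟩, ?_⟩
    -- first component: recover G = x₁^{1/(dl-1)}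
    set c := x₁ ^ ((1:ℝ)/((dl:ℝ) - 1)) with hc
    have hcast : ((dl:ℝ) - 1) = ((dl - 1 : ℕ) : ℝ) := by
      have : (1:ℕ) ≤ dl := by omega
      push_cast [Nat.cast_sub this]
      ring
    have hcpow : c ^ (dl - 1) = x₁ := by
      rw [hc, ← Real.rpow_natCast (x₁ ^ ((1:ℝ)/((dl:ℝ) - 1))) (dl - 1),
        ← Real.rpow_mul hx1pos.le]
      have hdne : ((dl:ℝ) - 1) ≠ 0 := by
        have : (3:ℝ) ≤ (dl:ℝ) := by exact_mod_cast hdl3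
        linarith
      rw [show (1:ℝ)/((dl:ℝ) - 1) * ((dl - 1 : ℕ) : ℝ) = 1 by
        rw [← hcast, one_div_mul_cancel hdne]]
      exact Real.rpow_one x₁
    have hG0 : (0:ℝ) ≤ 1 - (1-x₁)^(dr-1) * (1-x₂)^dg := by
      have : (1-x₁)^(dr-1) * (1-x₂)^dg ≤ 1 * 1 :=
        mul_le_mul (pow_le_one₀ ha0.le (by linarith)) (pow_le_one₀ hb0 hb1)
          (by positivity) one_pos.le
      linarith
    have hc0 : 0 ≤ c := Real.rpow_nonneg hx1pos.le _
    have hGc : 1 - (1-x₁)^(dr-1) * (1-x₂)^dg = c := by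
      have hinj := pow_left_strictMonoOn₀ (M₀ := ℝ) (n := dl - 1) (by omega) |>.injOn
      exact hinj hG0 hc0 (by dsimp only; rw [← h1, hcpow])
    -- second: (1-x₂)^dg = (1-c)/(1-x₁)^(dr-1)
    have hq : (1-x₂)^dg = (1 - c) / (1-x₁)^(dr-1) := by
      have hne' : ((1:ℝ)-x₁)^(dr-1) ≠ 0 := by positivity
      field_simp
      linarith [hGc]
    have hbrec : ((1 - c) / (1-x₁)^(dr-1)) ^ ((1:ℝ)/(dg:ℝ)) = 1 - x₂ := by
      rw [← hq, ← Real.rpow_natCast (1-x₂) dg, ← Real.rpow_mul hb0,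
        show (dg:ℝ) * ((1:ℝ)/(dg:ℝ)) = 1 by
          field_simp, Real.rpow_one]
    rw [hc] at hbrec
    linarith [hbrec]
end

section
/- Let (d_r,d_g) be either (2,2) or (3,3), let d_l > d_r be an integer, and let φ be a GEC transfer function with integral Φ. Suppose ε^SIR ∈ [0,1] satisfies Φ(1; ε^SIR) = 1 − d_r/d_l. Define the set of nonzero fixed points F(ε) := {(x₁,x₂) ∈ [0,1]² \ {(0,0)} : (x₁,x₂) = f(g(x₁,x₂); ε)} and the potential threshold ε* := sup{ε ∈ [0,1] : U(x₁,x₂;ε) > 0 for all (x₁,x₂) ∈ F(ε)}. Then ε* = ε^SIR. -/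
set_option maxHeartbeats 1600000


/-- The set of nonzero fixed points of the MN density evolution at `ε`. -/
noncomputable def FPset (dl dr dg : ℕ) (φ : ℝ → ℝ → ℝ) (ε : ℝ) : Set (ℝ × ℝ) :=
  {p | p ∈ Set.Icc (0:ℝ) 1 ×ˢ Set.Icc (0:ℝ) 1 ∧ p ≠ (0, 0) ∧
    p = fDE dl dg φ (gDE dr dg p.1 p.2).1 (gDE dr dg p.1 p.2).2 ε}

/-! ### Auxiliary lemmas -/

/-- `Φ(1;·)` is strictly increasing on `[0,1]`. -/
lemma Phi_one_lt (φ : ℝ → ℝ → ℝ) (hφ : IsGEC φ) {ε₁ ε₂ : ℝ}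
    (h₁ : ε₁ ∈ Set.Icc (0:ℝ) 1) (h₂ : ε₂ ∈ Set.Icc (0:ℝ) 1) (hlt : ε₁ < ε₂) :
    Phi φ 1 ε₁ < Phi φ 1 ε₂ := by
  have i₁ : IntervalIntegrable (fun t => φ t ε₁) MeasureTheory.volume 0 1 :=
    ContinuousOn.intervalIntegrable_of_Icc zero_le_one (hφ.2.1 ε₁ h₁).1
  have i₂ : IntervalIntegrable (fun t => φ t ε₂) MeasureTheory.volume 0 1 :=
    ContinuousOn.intervalIntegrable_of_Icc zero_le_one (hφ.2.1 ε₂ h₂).1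
  have hpos : 0 < ∫ t in (0:ℝ)..1, (φ t ε₂ - φ t ε₁) :=
    intervalIntegral.intervalIntegral_pos_of_pos_on (i₂.sub i₁)
      (fun x hx => sub_pos.2 (hφ.2.2 x ⟨hx.1.le, hx.2.le⟩ h₁ h₂ hlt)) one_pos
  rw [intervalIntegral.integral_sub i₂ i₁] at hpos
  have : Phi φ 1 ε₁ = ∫ t in (0:ℝ)..1, φ t ε₁ := rfl
  have : Phi φ 1 ε₂ = ∫ t in (0:ℝ)..1, φ t ε₂ := rfl
  unfold Phi
  linarith

/-- `Φ(c;ε) ≤ c · φ(c;ε)` for `c ∈ [0,1]`. -/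
lemma Phi_le_mul (φ : ℝ → ℝ → ℝ) (hφ : IsGEC φ) {c ε : ℝ}
    (hc : c ∈ Set.Icc (0:ℝ) 1) (hε : ε ∈ Set.Icc (0:ℝ) 1) :
    Phi φ c ε ≤ c * φ c ε := by
  have hsub : Set.Icc (0:ℝ) c ⊆ Set.Icc 0 1 := Set.Icc_subset_Icc le_rfl hc.2
  have i₁ : IntervalIntegrable (fun t => φ t ε) MeasureTheory.volume 0 c :=
    ContinuousOn.intervalIntegrable_of_Icc hc.1 (((hφ.2.1 ε hε).1).mono hsub)
  have i₂ : IntervalIntegrable (fun _ => φ c ε) MeasureTheory.volume 0 c :=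
    intervalIntegrable_const
  have hmono := (hφ.2.1 ε hε).2
  have h := intervalIntegral.integral_mono_on hc.1 i₁ i₂
    (fun x hx => hmono (hsub hx) hc hx.2)
  have hconst : (∫ _t in (0:ℝ)..c, φ c ε) = c * φ c ε := by
    simp [intervalIntegral.integral_const]
  unfold Phi
  rw [hconst] at h
  exact h

/-- From the fixed point relation `1-u = (1-p)^(n-1)` with `0 < p < 1`, `n ≥ 3`:
`u + p ≤ n p - (n-2) p²`. -/
lemma bernoulli_bound (n : ℕ) (hn : 2 < n) {u p : ℝ} (hp0 : 0 < p) (hp1 : p < 1)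
    (heq : 1 - u = (1-p)^(n-1)) : u + p ≤ (n:ℝ)*p - ((n:ℝ)-2)*p^2 := by
  have hcast : ((n-2 : ℕ) : ℝ) = (n:ℝ) - 2 := by
    have : (2:ℕ) ≤ n := hn.le
    push_cast [Nat.cast_sub this]
    ring
  have hb : (1:ℝ) - ((n:ℝ)-2)*p ≤ (1-p)^(n-2) := by
    have h := one_add_mul_le_pow (a := -p) (by linarith) (n-2)
    calc (1:ℝ) - ((n:ℝ)-2)*p = 1 + ((n-2:ℕ):ℝ) * (-p) := by rw [hcast]; ring
    _ ≤ (1 + -p)^(n-2) := h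
    _ = (1-p)^(n-2) := by ring_nf
  have hsplit : (1-p)^(n-1) = (1-p)^(n-2) * (1-p) := by
    rw [← pow_succ]
    congr 1
    omega
  have hmul : ((1:ℝ) - ((n:ℝ)-2)*p) * (1-p) ≤ (1-p)^(n-2) * (1-p) :=
    mul_le_mul_of_nonneg_right hb (by linarith)
  rw [← hsplit, ← heq] at hmul
  nlinarith [hmul]

/-- Positivity of the potential lower bound `W2` for `(2,2)`. -/
lemma W2pos2 (n : ℕ) (hn : 2 < n) {u v : ℝ} (hu0 : 0 < u) (hu1 : u < 1) (hv0 : 0 < v)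
    (hv1 : v ≤ 1) (heq : 1 - u = (1 - u*v^2)^(n-1)) :
    0 < 1 - (1-v)*(1-u^2*v) - (2/(n:ℝ))*(1 - u*v^2)*(1-u)
        - u^2*v^2 - 2*(1-u)*(u*v^2) - 2*(1-v)*(u^2*v) := by
  have hn0 : (0:ℝ) < n := by positivity
  set p := u*v^2 with hpdef
  have hp0 : 0 < p := by positivity
  have hv2 : v^2 ≤ 1 := by nlinarith
  have hp1 : p < 1 := by
    have := mul_le_mul_of_nonneg_left hv2 hu0.le
    rw [hpdef]; nlinarith
  have hkey : u + p ≤ (n:ℝ)*p - ((n:ℝ)-2)*p^2 := bernoulli_bound n hn hp0 hp1 heq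
  have hn3 : (3:ℝ) ≤ (n:ℝ) := by exact_mod_cast hn
  have hnp : u + p < (n:ℝ)*p := by nlinarith [mul_pos (show (0:ℝ) < (n:ℝ)-2 by linarith) (mul_pos hp0 hp0), sq_nonneg p, mul_pos hp0 hp0]
  -- core identity
  have hident : (u+p)*(1 - (1-v)*(1-u^2*v) - u^2*v^2 - 2*(1-u)*(u*v^2) - 2*(1-v)*(u^2*v))
      - 2*p*(1-p)*(1-u) = u*v*(1-u)*(1+u)*(1-v)^2 := by
    rw [hpdef]; ring
  have hpos : 0 ≤ u*v*(1-u)*(1+u)*(1-v)^2 := by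
    have h1 : (0:ℝ) ≤ 1 - u := by linarith
    have h2 : (0:ℝ) ≤ 1 + u := by linarith
    positivity
  have hX : 0 < (1 - p)*(1-u) := by nlinarith
  have hfrac : (2/(n:ℝ))*(u+p) < 2*p := by
    rw [div_mul_eq_mul_div, div_lt_iff₀ hn0]
    nlinarith
  -- conclude
  set W := 1 - (1-v)*(1-u^2*v) - (2/(n:ℝ))*(1 - u*v^2)*(1-u)
      - u^2*v^2 - 2*(1-u)*(u*v^2) - 2*(1-v)*(u^2*v) with hWdef
  have hup : 0 < u + p := by linarith
  have hmulpos : 0 < (u+p) * W := by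
    have e1 : (u+p) * W = ((u+p)*(1 - (1-v)*(1-u^2*v) - u^2*v^2 - 2*(1-u)*(u*v^2)
        - 2*(1-v)*(u^2*v)) - 2*p*(1-p)*(1-u)) + (2*p - (2/(n:ℝ))*(u+p))*((1-p)*(1-u)) := by
      rw [hWdef, hpdef]; ring
    rw [e1, hident]
    have : 0 < (2*p - (2/(n:ℝ))*(u+p))*((1-p)*(1-u)) := by
      apply mul_pos _ hX
      linarith
    linarith
  rcases mul_pos_iff.1 hmulpos with ⟨_, h⟩ | ⟨h, _⟩
  · exact h
  · linarith

/-- Positivity of the potential lower bound `W2` for `(3,3)`. -/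
lemma W2pos3 (n : ℕ) (hn : 3 < n) {u v : ℝ} (hu0 : 0 < u) (hu1 : u < 1) (hv0 : 0 < v)
    (hv1 : v ≤ 1) (heq : 1 - u = (1 - u^2*v^3)^(n-1)) :
    0 < 1 - (1-v)*(1-u^3*v^2) - (3/(n:ℝ))*(1 - u^2*v^3)*(1-u)
        - u^3*v^3 - 3*(1-u)*(u^2*v^3) - 3*(1-v)*(u^3*v^2) := by
  have hn0 : (0:ℝ) < n := by positivity
  set p := u^2*v^3 with hpdef
  have hp0 : 0 < p := by positivity
  have hv3 : v^3 ≤ 1 := by nlinarith [sq_nonneg v, sq_nonneg (1-v)]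
  have hu2 : u^2 < 1 := by nlinarith
  have hp1 : p < 1 := by
    have h := mul_le_mul_of_nonneg_left hv3 (sq_nonneg u)
    rw [hpdef]; nlinarith
  have hkey : u + p ≤ (n:ℝ)*p - ((n:ℝ)-2)*p^2 :=
    bernoulli_bound n (by omega) hp0 hp1 heq
  have hn4 : (4:ℝ) ≤ (n:ℝ) := by exact_mod_cast hn
  have hnp : u + p < (n:ℝ)*p := by nlinarith [mul_pos (show (0:ℝ) < (n:ℝ)-2 by linarith) (mul_pos hp0 hp0), sq_nonneg p, mul_pos hp0 hp0]
  have hident : (u+p)*(1 - (1-v)*(1-u^3*v^2) - u^3*v^3 - 3*(1-u)*(u^2*v^3) - 3*(1-v)*(u^3*v^2))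
      - 3*p*(1-p)*(1-u) = u*v*(
        2*u^4*(1-v)^2*v^3 + 3*u^4*(1-v)^3*v^2 + 3*u^4*(1-v)^4*v + u^4*(1-v)^5
        + 3*(1-u)*u^3*(1-v)*v^4 + 16*(1-u)*u^3*(1-v)^2*v^3 + 27*(1-u)*u^3*(1-v)^3*v^2
        + 18*(1-u)*u^3*(1-v)^4*v + 4*(1-u)*u^3*(1-v)^5
        + 9*(1-u)^2*u^2*(1-v)*v^4 + 36*(1-u)^2*u^2*(1-v)^2*v^3 + 51*(1-u)^2*u^2*(1-v)^3*v^2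
        + 30*(1-u)^2*u^2*(1-v)^4*v + 6*(1-u)^2*u^2*(1-v)^5
        + 2*(1-u)^3*u*v^5 + 13*(1-u)^3*u*(1-v)*v^4 + 32*(1-u)^3*u*(1-v)^2*v^3
        + 37*(1-u)^3*u*(1-v)^3*v^2 + 20*(1-u)^3*u*(1-v)^4*v + 4*(1-u)^3*u*(1-v)^5
        + (1-u)^4*v^5 + 5*(1-u)^4*(1-v)*v^4 + 10*(1-u)^4*(1-v)^2*v^3
        + 10*(1-u)^4*(1-v)^3*v^2 + 5*(1-u)^4*(1-v)^4*v + (1-u)^4*(1-v)^5) := by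
    rw [hpdef]; ring
  have hpos : 0 ≤ u*v*(
        2*u^4*(1-v)^2*v^3 + 3*u^4*(1-v)^3*v^2 + 3*u^4*(1-v)^4*v + u^4*(1-v)^5
        + 3*(1-u)*u^3*(1-v)*v^4 + 16*(1-u)*u^3*(1-v)^2*v^3 + 27*(1-u)*u^3*(1-v)^3*v^2
        + 18*(1-u)*u^3*(1-v)^4*v + 4*(1-u)*u^3*(1-v)^5
        + 9*(1-u)^2*u^2*(1-v)*v^4 + 36*(1-u)^2*u^2*(1-v)^2*v^3 + 51*(1-u)^2*u^2*(1-v)^3*v^2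
        + 30*(1-u)^2*u^2*(1-v)^4*v + 6*(1-u)^2*u^2*(1-v)^5
        + 2*(1-u)^3*u*v^5 + 13*(1-u)^3*u*(1-v)*v^4 + 32*(1-u)^3*u*(1-v)^2*v^3
        + 37*(1-u)^3*u*(1-v)^3*v^2 + 20*(1-u)^3*u*(1-v)^4*v + 4*(1-u)^3*u*(1-v)^5
        + (1-u)^4*v^5 + 5*(1-u)^4*(1-v)*v^4 + 10*(1-u)^4*(1-v)^2*v^3
        + 10*(1-u)^4*(1-v)^3*v^2 + 5*(1-u)^4*(1-v)^4*v + (1-u)^4*(1-v)^5) := by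
    have h1 : (0:ℝ) ≤ 1 - u := by linarith
    have h2 : (0:ℝ) ≤ 1 - v := by linarith
    have h3 : (0:ℝ) ≤ u := hu0.le
    have h4 : (0:ℝ) ≤ v := hv0.le
    positivity
  have hX : 0 < (1 - p)*(1-u) := by nlinarith
  have hfrac : (3/(n:ℝ))*(u+p) < 3*p := by
    rw [div_mul_eq_mul_div, div_lt_iff₀ hn0]
    nlinarith
  set W := 1 - (1-v)*(1-u^3*v^2) - (3/(n:ℝ))*(1 - u^2*v^3)*(1-u)
      - u^3*v^3 - 3*(1-u)*(u^2*v^3) - 3*(1-v)*(u^3*v^2) with hWdef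
  have hup : 0 < u + p := by linarith
  have hmulpos : 0 < (u+p) * W := by
    have e1 : (u+p) * W = ((u+p)*(1 - (1-v)*(1-u^3*v^2) - u^3*v^3 - 3*(1-u)*(u^2*v^3)
        - 3*(1-v)*(u^3*v^2)) - 3*p*(1-p)*(1-u)) + (3*p - (3/(n:ℝ))*(u+p))*((1-p)*(1-u)) := by
      rw [hWdef, hpdef]; ring
    rw [e1, hident]
    have : 0 < (3*p - (3/(n:ℝ))*(u+p))*((1-p)*(1-u)) := by
      apply mul_pos _ hX
      linarith
    nlinarith [hpos]
  rcases mul_pos_iff.1 hmulpos with ⟨_, h⟩ | ⟨h, _⟩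
  · exact h
  · linarith

lemma U_pos2 (dl : ℕ) (hdl : 2 < dl) (φ : ℝ → ℝ → ℝ) (hφ : IsGEC φ) {ε : ℝ}
    (hε : ε ∈ Set.Icc (0:ℝ) 1) (hgap : Phi φ 1 ε < 1 - 2/(dl:ℝ))
    {x₁ x₂ : ℝ} (hmem : (x₁, x₂) ∈ FPset dl 2 2 φ ε) :
    0 < U dl 2 2 φ x₁ x₂ ε := by
  obtain ⟨hbox, hne, hfix⟩ := hmem
  have hx₁m : x₁ ∈ Set.Icc (0:ℝ) 1 := hbox.1
  have hx₂m : x₂ ∈ Set.Icc (0:ℝ) 1 := hbox.2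
  obtain ⟨hx10, hx11⟩ := hx₁m
  obtain ⟨hx20, hx21⟩ := hx₂m
  -- fixed point equations
  have hfix1 : x₁ = (1 - (1-x₁) * (1-x₂)^2)^(dl-1) := by
    have h := congrArg Prod.fst hfix
    simpa [fDE, gDE] using h
  have hfix2 : x₂ = φ ((1 - (1-x₁)^2 * (1-x₂))^2) ε * (1 - (1-x₁)^2 * (1-x₂)) := by
    have h := congrArg Prod.snd hfix
    simpa [fDE, gDE] using h
  by_cases hx1top : x₁ = 1
  · -- U = 1 - Φ(1;ε) - 2/dl
    subst hx1top
    have hUval : U dl 2 2 φ 1 x₂ ε = 1 - Phi φ 1 ε - 2/(dl:ℝ) := by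
      unfold U
      norm_num
    rw [hUval]
    linarith
  · have hx1lt : x₁ < 1 := lt_of_le_of_ne hx11 hx1top
    -- x₁ > 0
    have hx1pos : 0 < x₁ := by
      rcases lt_or_eq_of_le hx10 with h | h
      · exact h
      · exfalso
        rw [← h] at hfix1
        have hz : ((1:ℝ) - (1-0) * (1-x₂)^2)^(dl-1) = 0 := hfix1.symm
        have hdl1 : dl - 1 ≠ 0 := by omega
        have hbase : (1:ℝ) - (1-0) * (1-x₂)^2 = 0 := by
          exact pow_eq_zero_iff hdl1 |>.1 hz
        have hx2sq : (1-x₂)^2 = 1 := by nlinarith [hbase]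
        have hx2z : x₂ = 0 := by nlinarith [hx2sq]
        exact hne (by rw [← h, hx2z])
    -- x₂ < 1
    have hx2lt : x₂ < 1 := by
      rcases lt_or_eq_of_le hx21 with h | h
      · exact h
      · exfalso
        rw [h] at hfix1
        have : x₁ = 1 := by
          rw [hfix1]
          norm_num
        exact hx1top this
    -- now the main case
    have hu0 : 0 < 1 - x₁ := by linarith
    have hu1 : 1 - x₁ < 1 := by linarith
    have hv0 : 0 < 1 - x₂ := by linarith
    have hv1 : 1 - x₂ ≤ 1 := by linarith
    have heq : 1 - (1 - x₁) = (1 - (1-x₁)*(1-x₂)^2)^(dl-1) := by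
      have : (1:ℝ) - (1 - x₁) = x₁ := by ring
      rw [this]; exact hfix1
    have hcore := W2pos2 dl hdl hu0 hu1 hv0 hv1 heq
    -- the Phi bound
    set c := ((1:ℝ) - (1-x₁)^2 * (1-x₂))^2 with hcdef
    have hq0 : 0 ≤ (1-x₁)^2 * (1-x₂) := by positivity
    have hq1 : (1-x₁)^2 * (1-x₂) ≤ 1 := by nlinarith
    have hc0 : 0 ≤ c := by positivity
    have hc1 : c ≤ 1 := by
      rw [hcdef]
      exact pow_le_one₀ (by linarith) (by linarith)
    have hPhi : Phi φ c ε ≤ c * φ c ε := Phi_le_mul φ hφ ⟨hc0, hc1⟩ hε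
    have hcs : c * φ c ε = (1 - (1-x₁)^2*(1-x₂)) * x₂ := by
      calc c * φ c ε = (1 - (1-x₁)^2*(1-x₂)) * (φ c ε * (1 - (1-x₁)^2*(1-x₂))) := by
            rw [hcdef]; ring
        _ = (1 - (1-x₁)^2*(1-x₂)) * x₂ := by rw [← hfix2]
    -- power identity
    have hpow : ((1:ℝ) - (1-x₁)*(1-x₂)^2)^dl
        = x₁ * (1 - (1-x₁)*(1-x₂)^2) := by
      have h1 : dl = (dl - 1) + 1 := by omega
      rw [h1, pow_succ, ← hfix1]
    -- unfold U and close
    have hUeq : U dl 2 2 φ x₁ x₂ ε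
        = 1 - Phi φ c ε - (2/(dl:ℝ)) * ((1 - (1-x₁)*(1-x₂)^2)^dl)
          - (1-x₁)^2*(1-x₂)^2 - 2*x₁*(1-x₁)*(1-x₂)^2 - 2*x₂*(1-x₁)^2*(1-x₂) := by
      unfold U
      norm_num [hcdef]
      try ring
    rw [hUeq, hpow]
    have hbridge : 1 - ((1 - (1-x₁)^2*(1-x₂)) * x₂) - (2/(dl:ℝ)) * (x₁ * (1 - (1-x₁)*(1-x₂)^2))
          - (1-x₁)^2*(1-x₂)^2 - 2*x₁*(1-x₁)*(1-x₂)^2 - 2*x₂*(1-x₁)^2*(1-x₂)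
        = 1 - (1-(1-x₂))*(1-(1-x₁)^2*(1-x₂)) - (2/(dl:ℝ))*(1 - (1-x₁)*(1-x₂)^2)*(1-(1-x₁))
          - (1-x₁)^2*(1-x₂)^2 - 2*(1-(1-x₁))*((1-x₁)*(1-x₂)^2) - 2*(1-(1-x₂))*((1-x₁)^2*(1-x₂)) := by
      ring
    linarith [hcore, hPhi, hcs.symm.le, hbridge]


lemma U_pos3 (dl : ℕ) (hdl : 3 < dl) (φ : ℝ → ℝ → ℝ) (hφ : IsGEC φ) {ε : ℝ}
    (hε : ε ∈ Set.Icc (0:ℝ) 1) (hgap : Phi φ 1 ε < 1 - 3/(dl:ℝ))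
    {x₁ x₂ : ℝ} (hmem : (x₁, x₂) ∈ FPset dl 3 3 φ ε) :
    0 < U dl 3 3 φ x₁ x₂ ε := by
  obtain ⟨hbox, hne, hfix⟩ := hmem
  have hx₁m : x₁ ∈ Set.Icc (0:ℝ) 1 := hbox.1
  have hx₂m : x₂ ∈ Set.Icc (0:ℝ) 1 := hbox.2
  obtain ⟨hx10, hx11⟩ := hx₁m
  obtain ⟨hx20, hx21⟩ := hx₂m
  have hfix1 : x₁ = (1 - (1-x₁)^2 * (1-x₂)^3)^(dl-1) := by
    have h := congrArg Prod.fst hfix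
    simpa [fDE, gDE] using h
  have hfix2 : x₂ = φ ((1 - (1-x₁)^3 * (1-x₂)^2)^3) ε * (1 - (1-x₁)^3 * (1-x₂)^2)^2 := by
    have h := congrArg Prod.snd hfix
    simpa [fDE, gDE] using h
  by_cases hx1top : x₁ = 1
  · subst hx1top
    have hUval : U dl 3 3 φ 1 x₂ ε = 1 - Phi φ 1 ε - 3/(dl:ℝ) := by
      unfold U
      norm_num
    rw [hUval]
    linarith
  · have hx1lt : x₁ < 1 := lt_of_le_of_ne hx11 hx1top
    have hx1pos : 0 < x₁ := by
      rcases lt_or_eq_of_le hx10 with h | h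
      · exact h
      · exfalso
        rw [← h] at hfix1
        have hz : ((1:ℝ) - (1-0)^2 * (1-x₂)^3)^(dl-1) = 0 := hfix1.symm
        have hdl1 : dl - 1 ≠ 0 := by omega
        have hbase : (1:ℝ) - (1-0)^2 * (1-x₂)^3 = 0 := by
          exact pow_eq_zero_iff hdl1 |>.1 hz
        have hx2cb : (1-x₂)^3 = 1 := by nlinarith [hbase]
        have hx2z : x₂ = 0 := by nlinarith [hx2cb, sq_nonneg (1-x₂), sq_nonneg x₂]
        exact hne (by rw [← h, hx2z])
    have hx2lt : x₂ < 1 := by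
      rcases lt_or_eq_of_le hx21 with h | h
      · exact h
      · exfalso
        rw [h] at hfix1
        have : x₁ = 1 := by
          rw [hfix1]
          norm_num
        exact hx1top this
    have hu0 : 0 < 1 - x₁ := by linarith
    have hu1 : 1 - x₁ < 1 := by linarith
    have hv0 : 0 < 1 - x₂ := by linarith
    have hv1 : 1 - x₂ ≤ 1 := by linarith
    have heq : 1 - (1 - x₁) = (1 - (1-x₁)^2*(1-x₂)^3)^(dl-1) := by
      have : (1:ℝ) - (1 - x₁) = x₁ := by ring
      rw [this]; exact hfix1
    have hcore := W2pos3 dl hdl hu0 hu1 hv0 hv1 heq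
    set c := ((1:ℝ) - (1-x₁)^3 * (1-x₂)^2)^3 with hcdef
    have hq0 : 0 ≤ (1-x₁)^3 * (1-x₂)^2 := by positivity
    have hq1 : (1-x₁)^3 * (1-x₂)^2 ≤ 1 := by
      have h1 : (1-x₁)^3 ≤ 1 := pow_le_one₀ (by linarith) (by linarith)
      have h2 : (1-x₂)^2 ≤ 1 := pow_le_one₀ (by linarith) (by linarith)
      nlinarith [pow_nonneg (show (0:ℝ) ≤ 1-x₁ by linarith) 3]
    have hc0 : 0 ≤ c := by
      rw [hcdef]
      exact pow_nonneg (by linarith) 3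
    have hc1 : c ≤ 1 := by
      rw [hcdef]
      exact pow_le_one₀ (by linarith) (by linarith)
    have hPhi : Phi φ c ε ≤ c * φ c ε := Phi_le_mul φ hφ ⟨hc0, hc1⟩ hε
    have hcs : c * φ c ε = (1 - (1-x₁)^3*(1-x₂)^2) * x₂ := by
      calc c * φ c ε
          = (1 - (1-x₁)^3*(1-x₂)^2) * (φ c ε * (1 - (1-x₁)^3*(1-x₂)^2)^2) := by
            rw [hcdef]; ring
        _ = (1 - (1-x₁)^3*(1-x₂)^2) * x₂ := by rw [← hfix2]
    have hpow : ((1:ℝ) - (1-x₁)^2*(1-x₂)^3)^dl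
        = x₁ * (1 - (1-x₁)^2*(1-x₂)^3) := by
      have h1 : dl = (dl - 1) + 1 := by omega
      rw [h1, pow_succ, ← hfix1]
    have hUeq : U dl 3 3 φ x₁ x₂ ε
        = 1 - Phi φ c ε - (3/(dl:ℝ)) * ((1 - (1-x₁)^2*(1-x₂)^3)^dl)
          - (1-x₁)^3*(1-x₂)^3 - 3*x₁*(1-x₁)^2*(1-x₂)^3 - 3*x₂*(1-x₁)^3*(1-x₂)^2 := by
      unfold U
      norm_num [hcdef]
      try ring
    rw [hUeq, hpow]
    have hbridge : 1 - ((1 - (1-x₁)^3*(1-x₂)^2) * x₂) - (3/(dl:ℝ)) * (x₁ * (1 - (1-x₁)^2*(1-x₂)^3))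
          - (1-x₁)^3*(1-x₂)^3 - 3*x₁*(1-x₁)^2*(1-x₂)^3 - 3*x₂*(1-x₁)^3*(1-x₂)^2
        = 1 - (1-(1-x₂))*(1-(1-x₁)^3*(1-x₂)^2) - (3/(dl:ℝ))*(1 - (1-x₁)^2*(1-x₂)^3)*(1-(1-x₁))
          - (1-x₁)^3*(1-x₂)^3 - 3*(1-(1-x₁))*((1-x₁)^2*(1-x₂)^3) - 3*(1-(1-x₂))*((1-x₁)^3*(1-x₂)^2) := by
      ring
    linarith [hcore, hPhi, hcs.symm.le, hbridge]

/-- For `(d_r,d_g) ∈ {(2,2),(3,3)}` and `d_l > d_r`, the potential threshold of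
the `(d_l,d_r,d_g)` MN code equals the SIR limit `ε^SIR` of the GEC. -/
theorem stmt10 (dl dr dg : ℕ)
    (hdeg : (dr = 2 ∧ dg = 2) ∨ (dr = 3 ∧ dg = 3)) (hrl : dr < dl)
    (φ : ℝ → ℝ → ℝ) (hφ : IsGEC φ)
    (εSIR : ℝ) (hεSIR : εSIR ∈ Set.Icc (0:ℝ) 1)
    (hSIR : Phi φ 1 εSIR = 1 - (dr : ℝ)/(dl : ℝ)) :
    sSup {ε ∈ Set.Icc (0:ℝ) 1 |
        ∀ p ∈ FPset dl dr dg φ ε, 0 < U dl dr dg φ p.1 p.2 ε}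
      = εSIR := by
  obtain ⟨rfl, rfl⟩ | ⟨rfl, rfl⟩ := hdeg
  · -- (2,2) case
    have hSIR' : Phi φ 1 εSIR = 1 - 2/(dl:ℝ) := by rw [hSIR]; norm_num
    have hS : {ε ∈ Set.Icc (0:ℝ) 1 |
        ∀ p ∈ FPset dl 2 2 φ ε, 0 < U dl 2 2 φ p.1 p.2 ε} = Set.Ico 0 εSIR := by
      ext ε
      simp only [Set.mem_setOf_eq, Set.mem_Ico, Set.mem_Icc]
      constructor
      · rintro ⟨⟨hε0, hε1⟩, hU⟩
        refine ⟨hε0, ?_⟩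
        have hφ1 : φ 1 ε ∈ Set.Icc (0:ℝ) 1 :=
          hφ.1 1 ⟨zero_le_one, le_rfl⟩ ε ⟨hε0, hε1⟩
        have hFP : ((1:ℝ), φ 1 ε) ∈ FPset dl 2 2 φ ε := by
          refine ⟨⟨⟨zero_le_one, le_rfl⟩, hφ1⟩, ?_, ?_⟩
          · simp
          · simp [fDE, gDE]
        have hUpos := hU _ hFP
        have hUval : U dl 2 2 φ (1:ℝ) (φ 1 ε) ε = 1 - Phi φ 1 ε - 2/(dl:ℝ) := by
          unfold U
          norm_num
        rw [hUval] at hUpos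
        by_contra hge
        push_neg at hge
        rcases eq_or_lt_of_le hge with h | h
        · rw [h] at hSIR'; linarith
        · have := Phi_one_lt φ hφ hεSIR ⟨hε0, hε1⟩ h
          linarith
      · rintro ⟨hε0, hεlt⟩
        have hε1 : ε ≤ 1 := le_trans hεlt.le hεSIR.2
        refine ⟨⟨hε0, hε1⟩, ?_⟩
        have hgap : Phi φ 1 ε < 1 - 2/(dl:ℝ) := by
          have := Phi_one_lt φ hφ ⟨hε0, hε1⟩ hεSIR hεlt
          linarith
        rintro ⟨x₁, x₂⟩ hFP
        exact U_pos2 dl hrl φ hφ ⟨hε0, hε1⟩ hgap hFP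
    rw [hS]
    rcases eq_or_lt_of_le hεSIR.1 with h0 | h0
    · rw [← h0]
      simp [Real.sSup_empty]
    · exact csSup_Ico h0
  · -- (3,3) case
    have hSIR' : Phi φ 1 εSIR = 1 - 3/(dl:ℝ) := by rw [hSIR]; norm_num
    have hS : {ε ∈ Set.Icc (0:ℝ) 1 |
        ∀ p ∈ FPset dl 3 3 φ ε, 0 < U dl 3 3 φ p.1 p.2 ε} = Set.Ico 0 εSIR := by
      ext ε
      simp only [Set.mem_setOf_eq, Set.mem_Ico, Set.mem_Icc]
      constructor
      · rintro ⟨⟨hε0, hε1⟩, hU⟩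
        refine ⟨hε0, ?_⟩
        have hφ1 : φ 1 ε ∈ Set.Icc (0:ℝ) 1 :=
          hφ.1 1 ⟨zero_le_one, le_rfl⟩ ε ⟨hε0, hε1⟩
        have hFP : ((1:ℝ), φ 1 ε) ∈ FPset dl 3 3 φ ε := by
          refine ⟨⟨⟨zero_le_one, le_rfl⟩, hφ1⟩, ?_, ?_⟩
          · simp
          · simp [fDE, gDE]
        have hUpos := hU _ hFP
        have hUval : U dl 3 3 φ (1:ℝ) (φ 1 ε) ε = 1 - Phi φ 1 ε - 3/(dl:ℝ) := by
          unfold U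
          norm_num
        rw [hUval] at hUpos
        by_contra hge
        push_neg at hge
        rcases eq_or_lt_of_le hge with h | h
        · rw [h] at hSIR'; linarith
        · have := Phi_one_lt φ hφ hεSIR ⟨hε0, hε1⟩ h
          linarith
      · rintro ⟨hε0, hεlt⟩
        have hε1 : ε ≤ 1 := le_trans hεlt.le hεSIR.2
        refine ⟨⟨hε0, hε1⟩, ?_⟩
        have hgap : Phi φ 1 ε < 1 - 3/(dl:ℝ) := by
          have := Phi_one_lt φ hφ ⟨hε0, hε1⟩ hεSIR hεlt
          linarith
        rintro ⟨x₁, x₂⟩ hFP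
        exact U_pos3 dl hrl φ hφ ⟨hε0, hε1⟩ hgap hFP
    rw [hS]
    rcases eq_or_lt_of_le hεSIR.1 with h0 | h0
    · rw [← h0]
      simp [Real.sSup_empty]
    · exact csSup_Ico h0
end

section
/- For the partial response 2 erasure channel with erasure probability ε ∈ [0,1], whose detector transfer function is φ_PR2(x;ε) := 4ε³(4 − 4(1−ε)x + (1−ε)x²)/(4 − 2(1−ε²)x − (1−ε)ε²x²)², the symmetric information rate satisfies I_PR2(ε) = 1 − ∫₀¹ φ_PR2(t;ε) dt = 1 − 2ε³(1+ε)/(2 + ε² + ε³); equivalently, ∫₀ˣ φ_PR2(t;ε) dt = 4ε·(1/2 − (2−x)/(4 − 2(1−ε²)x − (1−ε)ε²x²)) for every x ∈ [0,1]. -/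
/-- The detector transfer function of the partial response 2 erasure channel
PR2(ε): `φ_PR2(x;ε) := 4ε³(4 − 4(1−ε)x + (1−ε)x²)/(4 − 2(1−ε²)x − (1−ε)ε²x²)²`. -/
noncomputable def phiPR2 (x ε : ℝ) : ℝ :=
  4*ε^3 * (4 - 4*(1-ε)*x + (1-ε)*x^2) / (4 - 2*(1-ε^2)*x - (1-ε)*ε^2*x^2)^2

/-- For PR2(ε), `Φ_PR2(x;ε) = 4ε(1/2 − (2−x)/(4 − 2(1−ε²)x − (1−ε)ε²x²))`, and
hence the symmetric information rate is `I_PR2(ε) = 1 − 2ε³(1+ε)/(2+ε²+ε³)`. -/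
theorem stmt16 : ∀ ε ∈ Set.Icc (0:ℝ) 1,
    (1 - ∫ t in (0:ℝ)..1, phiPR2 t ε) = 1 - 2*ε^3*(1+ε)/(2 + ε^2 + ε^3) ∧
    ∀ x ∈ Set.Icc (0:ℝ) 1,
      (∫ t in (0:ℝ)..x, phiPR2 t ε)
        = 4*ε * (1/2 - (2 - x)/(4 - 2*(1-ε^2)*x - (1-ε)*ε^2*x^2)) := by
  intro ε hε
  obtain ⟨hε0, hε1⟩ := hε
  have hD : ∀ t ∈ Set.Icc (0:ℝ) 1, 0 < 4 - 2*(1-ε^2)*t - (1-ε)*ε^2*t^2 := by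
    intro t ht
    obtain ⟨ht0, ht1⟩ := ht
    nlinarith [sq_nonneg ε, sq_nonneg t, mul_nonneg (sub_nonneg.2 hε1) (sub_nonneg.2 ht1),
      mul_nonneg (mul_nonneg (sub_nonneg.2 hε1) (sub_nonneg.2 ht1)) (mul_nonneg ht0 ht0),
      mul_nonneg (mul_nonneg ht0 ht0) (mul_nonneg hε0 hε0),
      mul_nonneg (sub_nonneg.2 ht1) (mul_nonneg hε0 hε0)]
  have key : ∀ x ∈ Set.Icc (0:ℝ) 1,
      (∫ t in (0:ℝ)..x, phiPR2 t ε)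
        = 4*ε * (1/2 - (2 - x)/(4 - 2*(1-ε^2)*x - (1-ε)*ε^2*x^2)) := by
    intro x hx
    obtain ⟨hx0, hx1⟩ := hx
    set F : ℝ → ℝ := fun t => 4*ε * (1/2 - (2 - t)/(4 - 2*(1-ε^2)*t - (1-ε)*ε^2*t^2)) with hF
    have hderiv : ∀ t ∈ Set.uIcc (0:ℝ) x, HasDerivAt F (phiPR2 t ε) t := by
      intro t ht
      rw [Set.uIcc_of_le hx0] at ht
      have ht' : t ∈ Set.Icc (0:ℝ) 1 := ⟨ht.1, ht.2.trans hx1⟩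
      have hDt := hD t ht'
      have hDne : (4 - 2*(1-ε^2)*t - (1-ε)*ε^2*t^2) ≠ 0 := ne_of_gt hDt
      have hnum : HasDerivAt (fun t : ℝ => 2 - t) (-1) t := by
        simpa using (hasDerivAt_id t).const_sub 2
      have hden : HasDerivAt (fun t : ℝ => 4 - 2*(1-ε^2)*t - (1-ε)*ε^2*t^2)
          (-(2*(1-ε^2)) - (1-ε)*ε^2*(2*t)) t := by
        have h1 : HasDerivAt (fun t : ℝ => 2*(1-ε^2)*t) (2*(1-ε^2)) t := by
          simpa using (hasDerivAt_id t).const_mul (2*(1-ε^2))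
        have h2 : HasDerivAt (fun t : ℝ => (1-ε)*ε^2*t^2) ((1-ε)*ε^2*(2*t)) t := by
          have := (hasDerivAt_pow 2 t).const_mul ((1-ε)*ε^2)
          simpa [mul_comm, mul_assoc, mul_left_comm] using this
        exact (((hasDerivAt_const t (4:ℝ)).sub h1).sub h2).congr_deriv (by ring)
      have hdiv := hnum.div hden hDne
      have := ((hdiv.const_sub (1/2:ℝ)).const_mul (4*ε))
      refine this.congr_deriv ?_
      unfold phiPR2
      field_simp
      ring
    have hcont : IntervalIntegrable (fun t => phiPR2 t ε) MeasureTheory.volume 0 x := by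
      apply ContinuousOn.intervalIntegrable
      apply ContinuousOn.div
      · fun_prop
      · fun_prop
      · intro t ht
        rw [Set.uIcc_of_le hx0] at ht
        have := hD t ⟨ht.1, ht.2.trans hx1⟩
        positivity
    have := intervalIntegral.integral_eq_sub_of_hasDerivAt hderiv hcont
    rw [this]
    simp only [hF]
    norm_num
  refine ⟨?_, key⟩
  rw [key 1 ⟨zero_le_one, le_refl 1⟩]
  have h1 : (0:ℝ) < 2 + ε^2 + ε^3 := by positivity
  have h2 : 4 - 2*(1-ε^2)*1 - (1-ε)*ε^2*1^2 = 2 + ε^2 + ε^3 := by ring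
  rw [h2]
  have h3 : (2:ℝ) + ε^2 + ε^3 ≠ 0 := ne_of_gt h1
  field_simp
  ring
end
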